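/- arXiv:1810.01613 — 9 statements merged into one kernel-verified Lean document; each statement's English description precedes it below -/
import Mathlib

section
/- For every m ≥ 2, the sequence j ↦ (j/(m-j))·(a_j/a_{j-1}) is decreasing in j for 1 ≤ j ≤ m-1, where a_j = a_{m-1,j} is the coefficient of x^j in Π_{r=1}^{m-1}(1 + x/r). Consequently the sequence j ↦ j·a_j/a_{j-1} is also decreasing. -/
open Finset

noncomputable def ee : ℕ → ℕ → ℝ
  | 0, 0 => 1
  | 0, _+1 => 0
  | n+1, 0 => ee n 0
  | n+1, k+1 => ee n (k+1) + (1 / ((n : ℝ) + 1)) * ee n k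

lemma ee_eq_zero : ∀ n k : ℕ, n < k → ee n k = 0 := by
  intro n
  induction n with
  | zero =>
    intro k hk
    match k, hk with
    | k+1, _ => rfl
  | succ n ih =>
    intro k hk
    match k, hk with
    | k+1, hk =>
      show ee n (k+1) + (1 / ((n : ℝ) + 1)) * ee n k = 0
      rw [ih (k+1) (by omega), ih k (by omega)]
      ring

lemma ee_pos : ∀ n k : ℕ, k ≤ n → 0 < ee n k := by
  intro n
  induction n with
  | zero =>
    intro k hk
    interval_cases k
    · show (0:ℝ) < 1; norm_num
  | succ n ih =>
    intro k hk
    match k with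
    | 0 => exact ih 0 (by omega)
    | k+1 =>
      show 0 < ee n (k+1) + (1 / ((n : ℝ) + 1)) * ee n k
      have hk' : k ≤ n := by omega
      have h1 : 0 < ee n k := ih k hk'
      have ht : 0 < 1 / ((n : ℝ) + 1) := by positivity
      rcases le_or_gt (k+1) n with h | h
      · have := ih (k+1) h
        nlinarith
      · rw [ee_eq_zero n (k+1) h]
        nlinarith

lemma ee_nonneg (n k : ℕ) : 0 ≤ ee n k := by
  rcases le_or_gt k n with h | h
  · exact (ee_pos n k h).le
  · rw [ee_eq_zero n k h]

lemma ee_poly (n : ℕ) (x : ℝ) :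
    ∏ r ∈ Finset.Icc 1 n, (1 + x / (r : ℝ)) = ∑ j ∈ Finset.range (n+1), ee n j * x ^ j := by
  induction n with
  | zero => simp [ee]
  | succ n ih =>
    rw [Finset.prod_Icc_succ_top (by omega : 1 ≤ n + 1), ih]
    have hne : ((n : ℝ) + 1) ≠ 0 := by positivity
    have key : ∑ j ∈ Finset.range (n+2), ee (n+1) j * x ^ j
        = (∑ j ∈ Finset.range (n+1), ee n j * x ^ j) * (1 + x / ((n:ℝ)+1)) := by
      rw [Finset.sum_range_succ' (fun j => ee (n+1) j * x ^ j) (n+1)]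
      have hcong : ∀ j ∈ Finset.range (n+1), ee (n+1) (j+1) * x ^ (j+1)
          = ee n (j+1) * x^(j+1) + (1/((n:ℝ)+1)) * (ee n j * x ^ j) * x := by
        intro j _
        show (ee n (j+1) + (1/((n:ℝ)+1)) * ee n j) * x ^ (j+1) = _
        ring
      rw [Finset.sum_congr rfl hcong, Finset.sum_add_distrib]
      have h2 : ∑ j ∈ Finset.range (n+1), ee n (j+1) * x ^ (j+1)
          = (∑ j ∈ Finset.range (n+1), ee n j * x ^ j) - ee n 0 * x ^ 0
            + ee n (n+1) * x^(n+1) := by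
        rw [Finset.sum_range_succ' (fun j => ee n j * x ^ j) n,
          Finset.sum_range_succ (fun j => ee n (j+1) * x^(j+1)) n]
        ring
      have h3 : ∑ j ∈ Finset.range (n+1), (1/((n:ℝ)+1)) * (ee n j * x ^ j) * x
          = (1/((n:ℝ)+1)) * (∑ j ∈ Finset.range (n+1), ee n j * x ^ j) * x := by
        rw [Finset.mul_sum, Finset.sum_mul]
      rw [h2, h3, ee_eq_zero n (n+1) (by omega)]
      show _ + ee n 0 * x ^ 0 = _
      ring
    rw [show n + 1 + 1 = n + 2 from rfl] at key
    rw [key]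
    push_cast
    ring

lemma aux_nonneg_of_mul {a b : ℝ} (hb : 0 < b) (h : 0 ≤ a * b) : 0 ≤ a := by
  nlinarith

lemma key0 (N p q r t : ℝ) (hN : 1 ≤ N) (hp : 0 < p) (hq : 0 < q) (hr : 0 ≤ r)
    (ht : 0 < t) (hF : r*p*(2*N) ≤ q^2*(N-1)) :
    (r + t*q)*p*(2*(N+1)) ≤ (q + t*p)^2*N := by
  have hE : 0 ≤ ((q + t*p)^2*N - (r + t*q)*p*(2*(N+1))) * N := by
    nlinarith [sq_nonneg (q - N*t*p), mul_nonneg (sub_nonneg.2 hF) (by linarith : (0:ℝ) ≤ N + 1)]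
  nlinarith [hE]

lemma key (c d p q r s t : ℝ) (hc : 0 ≤ c) (hd : 2 ≤ d) (hp : 0 ≤ p)
    (hq : 0 < q) (hr : 0 < r) (hs : 0 ≤ s) (ht : 0 < t)
    (hF1 : s*q*((c+3)*(d-1)) ≤ r^2*((c+2)*(d-2)))
    (hF2 : r*p*((c+2)*d) ≤ q^2*((c+1)*(d-1))) :
    (s+t*r)*(q+t*p)*((c+3)*d) ≤ (r+t*q)^2*((c+2)*(d-1)) := by
  have hc2 : (0:ℝ) ≤ c + 2 := by linarith
  have hd2 : (0:ℝ) ≤ d - 2 := by linarith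
  have h2 : 0 ≤ (r^2*((c+2)*(d-2))) * (q^2*((c+1)*(d-1)) - r*p*((c+2)*d)) :=
    mul_nonneg (mul_nonneg (sq_nonneg r) (mul_nonneg hc2 hd2)) (by linarith)
  have h3 : 0 ≤ (r*p*((c+2)*d)) * (r^2*((c+2)*(d-2)) - s*q*((c+3)*(d-1))) :=
    mul_nonneg (mul_nonneg (mul_nonneg hr.le hp) (mul_nonneg hc2 (by linarith))) (by linarith)
  have hPdM : 0 ≤ ((c+2)*(d-1)) * ((c+1)*(d-2)*(q^2*r^2) - (c+3)*d*(s*p*q*r)) := by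
    have hident : ((c+2)*(d-1)) * ((c+1)*(d-2)*(q^2*r^2) - (c+3)*d*(s*p*q*r))
        = (r^2*((c+2)*(d-2))) * (q^2*((c+1)*(d-1)) - r*p*((c+2)*d))
          + (r*p*((c+2)*d)) * (r^2*((c+2)*(d-2)) - s*q*((c+3)*(d-1))) := by ring
    rw [hident]; exact add_nonneg h2 h3
  have hMpos : (0:ℝ) < (c+2)*(d-1) := by nlinarith
  have hPd : 0 ≤ (c+1)*(d-2)*(q^2*r^2) - (c+3)*d*(s*p*q*r) :=
    aux_nonneg_of_mul hMpos (by linarith [mul_comm ((c+2)*(d-1)) ((c+1)*(d-2)*(q^2*r^2) - (c+3)*d*(s*p*q*r)) ▸ hPdM, hPdM] : 0 ≤ ((c+1)*(d-2)*(q^2*r^2) - (c+3)*d*(s*p*q*r)) * ((c+2)*(d-1)))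
  have T1 : 0 ≤ ((c+2)*d*(q*r)) * (r^2*((c+2)*(d-2)) - s*q*((c+3)*(d-1))) :=
    mul_nonneg (mul_nonneg (mul_nonneg hc2 (by linarith)) (mul_pos hq hr).le) (by linarith)
  have T2 : 0 ≤ (t*((d-1)*(c+2))) * ((c+1)*(d-2)*(q^2*r^2) - (c+3)*d*(s*p*q*r)) :=
    mul_nonneg (mul_nonneg ht.le (mul_nonneg (by linarith) hc2)) hPd
  have T3 : 0 ≤ (t^2*((c+3)*(d-1))*(q*r)) * (q^2*((c+1)*(d-1)) - r*p*((c+2)*d)) :=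
    mul_nonneg (mul_nonneg (mul_nonneg (sq_nonneg t) (mul_nonneg (by linarith) (by linarith)))
      (mul_pos hq hr).le) (by linarith)
  have T4 : 0 ≤ (q*r) * ((c+2)*r - t*(d-1)*q)^2 :=
    mul_nonneg (mul_pos hq hr).le (sq_nonneg _)
  have hE : 0 ≤ ((r+t*q)^2*((c+2)*(d-1)) - (s+t*r)*(q+t*p)*((c+3)*d)) * ((d-1)*(c+2)*q*r) := by
    have hident2 : ((r+t*q)^2*((c+2)*(d-1)) - (s+t*r)*(q+t*p)*((c+3)*d)) * ((d-1)*(c+2)*q*r)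
        = ((c+2)*d*(q*r)) * (r^2*((c+2)*(d-2)) - s*q*((c+3)*(d-1)))
          + (t*((d-1)*(c+2))) * ((c+1)*(d-2)*(q^2*r^2) - (c+3)*d*(s*p*q*r))
          + (t^2*((c+3)*(d-1))*(q*r)) * (q^2*((c+1)*(d-1)) - r*p*((c+2)*d))
          + (q*r) * ((c+2)*r - t*(d-1)*q)^2 := by ring
    rw [hident2]
    exact add_nonneg (add_nonneg (add_nonneg T1 T2) T3) T4
  have hMpos2 : (0:ℝ) < (d-1)*(c+2)*q*r :=
    mul_pos (mul_pos (mul_pos (by linarith) (by linarith)) hq) hr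
  have := aux_nonneg_of_mul hMpos2 hE
  linarith

lemma newton : ∀ n j : ℕ, j + 1 ≤ n →
    ee n (j+2) * ee n j * (((j:ℝ)+2)*((n:ℝ)-(j:ℝ))) ≤
      ee n (j+1)^2 * (((j:ℝ)+1)*((n:ℝ)-(j:ℝ)-1)) := by
  intro n
  induction n with
  | zero => intro j hj; omega
  | succ n ih =>
    intro j hj
    rcases Nat.lt_or_ge (j+1) (n+1) with hlt | hge
    · -- main case : j + 1 ≤ n
      have hj1 : j + 1 ≤ n := by omega
      have ht : (0:ℝ) < 1 / ((n:ℝ)+1) := by positivity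
      match j with
      | 0 =>
        have hF := ih 0 (by omega)
        push_cast at hF
        have hp : 0 < ee n 0 := ee_pos n 0 (by omega)
        have hq : 0 < ee n 1 := ee_pos n 1 (by omega)
        have hr : 0 ≤ ee n 2 := ee_nonneg n 2
        have hN : (1:ℝ) ≤ (n:ℝ) := by exact_mod_cast Nat.one_le_cast.mpr (by omega)
        have hkey := key0 (n:ℝ) (ee n 0) (ee n 1) (ee n 2) (1/((n:ℝ)+1)) hN hp hq hr ht
          (by nlinarith [hF])
        show (ee n 2 + (1/((n:ℝ)+1)) * ee n 1) * (ee n 0) * _ ≤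
          (ee n 1 + (1/((n:ℝ)+1)) * ee n 0)^2 * _
        push_cast
        nlinarith [hkey]
      | i+1 =>
        have hi2 : i + 2 ≤ n := by omega
        have hF1 := ih (i+1) (by omega)
        have hF2 := ih i (by omega)
        push_cast at hF1 hF2
        have hp : 0 ≤ ee n i := ee_nonneg n i
        have hq : 0 < ee n (i+1) := ee_pos n (i+1) (by omega)
        have hr : 0 < ee n (i+2) := ee_pos n (i+2) hi2
        have hs : 0 ≤ ee n (i+3) := ee_nonneg n (i+3)
        have hd : (2:ℝ) ≤ (n:ℝ) - (i:ℝ) := by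
          have : (i:ℝ) + 2 ≤ (n:ℝ) := by exact_mod_cast hi2
          linarith
        have hkey := key (i:ℝ) ((n:ℝ) - (i:ℝ)) (ee n i) (ee n (i+1)) (ee n (i+2))
          (ee n (i+3)) (1/((n:ℝ)+1)) (by positivity) hd hp hq hr hs ht
          (by nlinarith [hF1]) (by nlinarith [hF2])
        show (ee n (i+3) + (1/((n:ℝ)+1)) * ee n (i+2)) *
            (ee n (i+1) + (1/((n:ℝ)+1)) * ee n i) * _ ≤
          (ee n (i+2) + (1/((n:ℝ)+1)) * ee n (i+1))^2 * _
        push_cast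
        nlinarith [hkey]
    · -- degenerate case j = n : both sides vanish
      have hjn : j = n := by omega
      subst hjn
      rw [ee_eq_zero (j+1) (j+2) (by omega)]
      have hz : ((j:ℝ)+1) - (j:ℝ) - 1 = 0 := by ring
      push_cast
      rw [hz]
      ring_nf
      exact le_rfl

theorem stmt5 (m : ℕ) (hm : 2 ≤ m) (a : ℕ → ℝ)
    (ha : ∀ x : ℝ, ∏ r ∈ Finset.Icc 1 (m - 1), (1 + x / r) =
      ∑ j ∈ Finset.range m, a j * x ^ j) :
    (∀ j : ℕ, 1 ≤ j → j + 1 ≤ m - 1 →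
      ((j + 1 : ℝ) / (m - (j + 1))) * (a (j + 1) / a j) ≤
        ((j : ℝ) / (m - j)) * (a j / a (j - 1))) ∧
    (∀ j : ℕ, 1 ≤ j → j + 1 ≤ m - 1 →
      ((j : ℝ) + 1) * (a (j + 1) / a j) ≤ (j : ℝ) * (a j / a (j - 1))) := by
  have hm1 : (1:ℕ) ≤ m := by omega
  have ha' : ∀ x : ℝ, ∑ j ∈ Finset.range m, a j * x ^ j
      = ∑ j ∈ Finset.range m, ee (m-1) j * x ^ j := by
    intro x
    rw [← ha x, ee_poly (m-1) x, show m - 1 + 1 = m by omega]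
  have haj : ∀ j, j < m → a j = ee (m-1) j := by
    intro j hj
    have hP : (∑ i ∈ Finset.range m, Polynomial.C (a i) * Polynomial.X ^ i)
        = (∑ i ∈ Finset.range m, Polynomial.C (ee (m-1) i) * Polynomial.X ^ i) := by
      apply Polynomial.funext
      intro x
      simp only [Polynomial.eval_finset_sum, Polynomial.eval_mul, Polynomial.eval_C,
        Polynomial.eval_pow, Polynomial.eval_X]
      exact ha' x
    have hco := congrArg (fun p => Polynomial.coeff p j) hP
    simpa [Polynomial.finset_sum_coeff, Polynomial.coeff_C_mul, Polynomial.coeff_X_pow,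
      Finset.sum_ite_eq', hj] using hco
  have hcast : ((m - 1 : ℕ) : ℝ) = (m:ℝ) - 1 := by
    rw [Nat.cast_sub hm1, Nat.cast_one]
  constructor
  · intro j hj1 hj2
    obtain ⟨i, rfl⟩ : ∃ i, j = i + 1 := ⟨j - 1, by omega⟩
    have hNewton := newton (m-1) i (by omega)
    rw [hcast] at hNewton
    have hp : 0 < ee (m-1) i := ee_pos (m-1) i (by omega)
    have hq : 0 < ee (m-1) (i+1) := ee_pos (m-1) (i+1) (by omega)
    have hi3 : ((i:ℝ) + 3) ≤ (m:ℝ) := by exact_mod_cast (show i + 3 ≤ m by omega)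
    simp only [Nat.add_sub_cancel]
    rw [haj i (by omega), haj (i+1) (by omega), haj (i+1+1) (by omega)]
    have d1 : (0:ℝ) < (m:ℝ) - (↑(i+1) + 1) := by push_cast; linarith
    have d2 : (0:ℝ) < (m:ℝ) - (↑(i+1)) := by push_cast; linarith
    rw [div_mul_div_comm, div_mul_div_comm,
      div_le_div_iff₀ (mul_pos d1 hq) (mul_pos d2 hp)]
    push_cast
    push_cast at hNewton
    nlinarith [hNewton]
  · intro j hj1 hj2
    obtain ⟨i, rfl⟩ : ∃ i, j = i + 1 := ⟨j - 1, by omega⟩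
    have hNewton := newton (m-1) i (by omega)
    rw [hcast] at hNewton
    have hp : 0 < ee (m-1) i := ee_pos (m-1) i (by omega)
    have hq : 0 < ee (m-1) (i+1) := ee_pos (m-1) (i+1) (by omega)
    have hi3 : ((i:ℝ) + 3) ≤ (m:ℝ) := by exact_mod_cast (show i + 3 ≤ m by omega)
    simp only [Nat.add_sub_cancel]
    rw [haj i (by omega), haj (i+1) (by omega), haj (i+1+1) (by omega)]
    rw [← mul_div_assoc, ← mul_div_assoc, div_le_div_iff₀ hq hp]
    push_cast
    push_cast at hNewton
    nlinarith [hNewton, sq_nonneg (ee (m-1) (i+1)),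
      mul_nonneg (Nat.cast_nonneg i (α := ℝ)) (sq_nonneg (ee (m-1) (i+1)))]
end

section
/- For every m ≥ 2 and every 1 ≤ j ≤ m-1, a_j/a_{j-1} ≤ h_{m-1}/j, where a_j = a_{m-1,j} is the coefficient of x^j in Π_{r=1}^{m-1}(1 + x/r) and h_{m-1} = Σ_{r=1}^{m-1} 1/r. -/
open Finset in
lemma key_ineq (s : Finset ℕ) (f : ℕ → ℝ) (hf : ∀ r, 0 ≤ f r) (j : ℕ) :
    ((j : ℝ) + 1) * ∑ T ∈ s.powersetCard (j + 1), ∏ r ∈ T, f r ≤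
      (∑ r ∈ s, f r) * ∑ T ∈ s.powersetCard j, ∏ r ∈ T, f r := by
  have h1 : ((j : ℝ) + 1) * ∑ T ∈ s.powersetCard (j + 1), ∏ r ∈ T, f r =
      ∑ T ∈ s.powersetCard (j + 1), ∑ r ∈ T, f r * ∏ x ∈ T.erase r, f x := by
    rw [Finset.mul_sum]
    refine Finset.sum_congr rfl fun T hT => ?_
    have hc := (Finset.mem_powersetCard.mp hT).2
    have : ∀ r ∈ T, f r * ∏ x ∈ T.erase r, f x = ∏ x ∈ T, f x :=
      fun r hr => Finset.mul_prod_erase T f hr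
    rw [Finset.sum_congr rfl this, Finset.sum_const, hc, nsmul_eq_mul]
    push_cast
    ring
  rw [h1, Finset.sum_mul]
  have h2 : (∑ r ∈ s, f r * ∑ T ∈ s.powersetCard j, ∏ x ∈ T, f x) =
      ∑ q ∈ s ×ˢ s.powersetCard j, f q.1 * ∏ x ∈ q.2, f x := by
    rw [Finset.sum_product]
    exact Finset.sum_congr rfl fun r _ => Finset.mul_sum _ _ _
  rw [h2]
  rw [← Finset.sum_sigma (s.powersetCard (j + 1)) (fun T => T)
      (fun p => f p.2 * ∏ x ∈ p.1.erase p.2, f x)]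
  set D := (s.powersetCard (j + 1)).sigma (fun T => (T : Finset ℕ)) with hD
  set e : (Σ _ : Finset ℕ, ℕ) → ℕ × Finset ℕ := fun p => (p.2, p.1.erase p.2) with he
  have hinj : ∀ p ∈ D, ∀ p' ∈ D, e p = e p' → p = p' := by
    rintro ⟨T, r⟩ hp ⟨T', r'⟩ hp' heq
    simp only [he, Prod.mk.injEq] at heq
    obtain ⟨h1, h2⟩ := heq
    subst h1
    simp only [hD, Finset.mem_sigma] at hp hp'
    have : T = T' := by
      rw [← Finset.insert_erase hp.2, h2, Finset.insert_erase hp'.2]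
    subst this; rfl
  have himg : Finset.image e D ⊆ s ×ˢ s.powersetCard j := by
    rintro q hq
    simp only [Finset.mem_image] at hq
    obtain ⟨⟨T, r⟩, hp, rfl⟩ := hq
    simp only [hD, Finset.mem_sigma] at hp
    obtain ⟨hT, hr⟩ := hp
    rw [Finset.mem_powersetCard] at hT
    simp only [he, Finset.mem_product, Finset.mem_powersetCard]
    refine ⟨hT.1 hr, (Finset.erase_subset r T).trans hT.1, ?_⟩
    rw [Finset.card_erase_of_mem hr, hT.2]; omega
  calc ∑ p ∈ D, f p.2 * ∏ x ∈ p.1.erase p.2, f x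
      = ∑ q ∈ Finset.image e D, f q.1 * ∏ x ∈ q.2, f x := by
        rw [Finset.sum_image hinj]
    _ ≤ ∑ q ∈ s ×ˢ s.powersetCard j, f q.1 * ∏ x ∈ q.2, f x := by
        refine Finset.sum_le_sum_of_subset_of_nonneg himg fun q _ _ => ?_
        exact mul_nonneg (hf _) (Finset.prod_nonneg fun x _ => hf x)

theorem stmt6 (m : ℕ) (hm : 2 ≤ m) (a : ℕ → ℝ)
    (ha : ∀ k : ℕ, a k = ∑ T ∈ (Finset.Icc 1 (m - 1)).powersetCard k,
      ∏ r ∈ T, (1 : ℝ) / r)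
    (j : ℕ) (hj1 : 1 ≤ j) (hj2 : j ≤ m - 1) :
    a j / a (j - 1) ≤ (∑ r ∈ Finset.Icc 1 (m - 1), (1 : ℝ) / r) / j := by
  have hf : ∀ r : ℕ, (0 : ℝ) ≤ 1 / r := fun r => by positivity
  have hpos : 0 < a (j - 1) := by
    rw [ha]
    have hcard : j - 1 ≤ (Finset.Icc 1 (m - 1)).card := by
      rw [Nat.card_Icc]; omega
    obtain ⟨t, hts, htc⟩ := Finset.exists_subset_card_eq hcard
    refine Finset.sum_pos (fun T hT => ?_) ⟨t, Finset.mem_powersetCard.mpr ⟨hts, htc⟩⟩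
    refine Finset.prod_pos fun r hr => ?_
    have hr1 : 1 ≤ r := (Finset.mem_Icc.mp ((Finset.mem_powersetCard.mp hT).1 hr)).1
    have : (0 : ℝ) < r := by exact_mod_cast hr1.trans_lt' (by norm_num)
    positivity
  have hjpos : (0 : ℝ) < j := by exact_mod_cast hj1
  rw [div_le_div_iff₀ hpos hjpos]
  have hk := key_ineq (Finset.Icc 1 (m - 1)) (fun r => 1 / (r : ℝ)) hf (j - 1)
  have hcast : ((j - 1 : ℕ) : ℝ) + 1 = (j : ℝ) := by
    have : j - 1 + 1 = j := by omega
    exact_mod_cast congrArg (Nat.cast : ℕ → ℝ) this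
  rw [hcast] at hk
  have hjj : j - 1 + 1 = j := by omega
  rw [hjj] at hk
  rw [ha j, ha (j - 1)]
  calc (∑ T ∈ (Finset.Icc 1 (m-1)).powersetCard j, ∏ r ∈ T, (1:ℝ)/r) * j
      = (j : ℝ) * ∑ T ∈ (Finset.Icc 1 (m-1)).powersetCard j, ∏ r ∈ T, (1:ℝ)/r := by ring
    _ ≤ _ := hk
end

section
/- For every m ≥ 2 and every integer j with 1 ≤ j ≤ h_{m-1}/2, one has a_j/a_{j-1} ≥ (h_{m-1}-1)/j, where a_j is the j-th elementary symmetric polynomial of 1, 1/2, ..., 1/(m-1) and h_{m-1} = Σ_{r=1}^{m-1} 1/r. -/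
open Finset

noncomputable def Esym (x : ℕ → ℝ) (s : Finset ℕ) (k : ℕ) : ℝ :=
  ∑ T ∈ s.powersetCard k, ∏ i ∈ T, x i

lemma Esym_zero (x : ℕ → ℝ) (s : Finset ℕ) : Esym x s 0 = 1 := by
  simp [Esym]

lemma Esym_one (x : ℕ → ℝ) (s : Finset ℕ) : Esym x s 1 = ∑ i ∈ s, x i := by
  simp [Esym, powersetCard_one, Finset.sum_map]

lemma Esym_insert (x : ℕ → ℝ) {a : ℕ} {s : Finset ℕ} (h : a ∉ s) (k : ℕ) :
    Esym x (insert a s) (k+1) = Esym x s (k+1) + x a * Esym x s k := by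
  classical
  unfold Esym
  rw [powersetCard_succ_insert h, Finset.sum_union, Finset.sum_image, Finset.mul_sum]
  · congr 1
    refine Finset.sum_congr rfl fun T hT => ?_
    rw [mem_powersetCard] at hT
    rw [Finset.prod_insert (fun hc => h (hT.1 hc))]
  · intro T hT U hU hTU
    rw [Finset.mem_coe, mem_powersetCard] at hT hU
    have hTa : a ∉ T := fun hc => h (hT.1 hc)
    have hUa : a ∉ U := fun hc => h (hU.1 hc)
    rw [← Finset.erase_insert hTa, hTU, Finset.erase_insert hUa]
  · rw [Finset.disjoint_right]
    intro T hT hT2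
    simp only [Finset.mem_image] at hT
    obtain ⟨U, hU, rfl⟩ := hT
    rw [mem_powersetCard] at hT2
    exact h (hT2.1 (Finset.mem_insert_self a U))

lemma Esym_nonneg {x : ℕ → ℝ} {s : Finset ℕ} (hx : ∀ i ∈ s, 0 ≤ x i) (k : ℕ) :
    0 ≤ Esym x s k := by
  refine Finset.sum_nonneg fun T hT => Finset.prod_nonneg fun i hi => ?_
  rw [mem_powersetCard] at hT
  exact hx i (hT.1 hi)

lemma Esym_mono {x : ℕ → ℝ} {s t : Finset ℕ} (hst : s ⊆ t) (hx : ∀ i ∈ t, 0 ≤ x i) (k : ℕ) :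
    Esym x s k ≤ Esym x t k := by
  refine Finset.sum_le_sum_of_subset_of_nonneg (powersetCard_mono hst) fun T hT _ => ?_
  refine Finset.prod_nonneg fun i hi => ?_
  rw [mem_powersetCard] at hT
  exact hx i (hT.1 hi)

lemma Esym_pos {x : ℕ → ℝ} {s : Finset ℕ} (hx : ∀ i ∈ s, 0 < x i) {k : ℕ} (hk : k ≤ s.card) :
    0 < Esym x s k := by
  refine Finset.sum_pos (fun T hT => Finset.prod_pos fun i hi => ?_) ?_
  · rw [mem_powersetCard] at hT
    exact hx i (hT.1 hi)
  · exact powersetCard_nonempty.2 hk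

lemma Esym_L1 (x : ℕ → ℝ) (s : Finset ℕ) :
    ∀ k : ℕ, ∑ i ∈ s, x i * Esym x (s.erase i) k = (k+1) * Esym x s (k+1) := by
  classical
  induction s using Finset.induction_on with
  | empty =>
    intro k
    have he : (∅ : Finset ℕ).powersetCard (k+1) = ∅ := by simp
    simp [Esym, he]
  | @insert a s h ih =>
    intro k
    rw [Finset.sum_insert h, Finset.erase_insert h]
    have herase : ∀ i ∈ s, (insert a s).erase i = insert a (s.erase i) := by
      intro i hi
      exact Finset.erase_insert_of_ne (fun hc => h (hc ▸ hi)) -- check name/direction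
    rw [Finset.sum_congr rfl (fun i hi => by rw [herase i hi])]
    cases k with
    | zero =>
      simp only [Esym_zero, mul_one]
      rw [Nat.cast_zero, zero_add, one_mul, Esym_one, Finset.sum_insert h]
    | succ k' =>
      have expand : ∀ i ∈ s, x i * Esym x (insert a (s.erase i)) (k'+1)
          = x i * Esym x (s.erase i) (k'+1) + x a * (x i * Esym x (s.erase i) k') := by
        intro i hi
        rw [Esym_insert x (fun hc => h (Finset.mem_of_mem_erase hc)) k']
        ring
      rw [Finset.sum_congr rfl expand, Finset.sum_add_distrib, ← Finset.mul_sum, ih (k'+1), ih k',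
        Esym_insert x h (k'+1)]
      push_cast
      ring

lemma Esym_erase (x : ℕ → ℝ) {i : ℕ} {s : Finset ℕ} (hi : i ∈ s) (k : ℕ) :
    Esym x s (k+1) = Esym x (s.erase i) (k+1) + x i * Esym x (s.erase i) k := by
  conv_lhs => rw [← Finset.insert_erase hi]
  exact Esym_insert x (Finset.notMem_erase i s) k

/-- Main identity: (k+2)·e_{k+2} = S·e_{k+1} − Σ xᵢ²·e_k(s∖i). -/
lemma Esym_main (x : ℕ → ℝ) (s : Finset ℕ) (k : ℕ) :
    ((k:ℝ)+2) * Esym x s (k+2) =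
      (∑ i ∈ s, x i) * Esym x s (k+1) - ∑ i ∈ s, (x i)^2 * Esym x (s.erase i) k := by
  have h1 := Esym_L1 x s (k+1)
  have h2 := Esym_L1 x s k
  have expand : ∀ i ∈ s, x i * Esym x (s.erase i) (k+1)
      = x i * Esym x s (k+1) - (x i)^2 * Esym x (s.erase i) k := by
    intro i hi
    rw [Esym_erase x hi k]; ring
  rw [Finset.sum_congr rfl expand] at h1
  push_cast at h1 ⊢
  rw [Finset.sum_sub_distrib, ← Finset.sum_mul] at h1
  linarith [h1]

/-- Ratio bound: if 0 ≤ x ≤ c on s then (S − c·k)·e_k ≤ (k+1)·e_{k+1}. -/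
lemma Esym_ratio {x : ℕ → ℝ} {s : Finset ℕ} {c : ℝ}
    (hx : ∀ i ∈ s, 0 ≤ x i) (hxc : ∀ i ∈ s, x i ≤ c) (k : ℕ) :
    ((∑ i ∈ s, x i) - c * k) * Esym x s k ≤ ((k:ℝ)+1) * Esym x s (k+1) := by
  cases k with
  | zero =>
    simp [Esym_zero, Esym_one]
  | succ u =>
    have hmain := Esym_main x s u
    have hb : ∑ i ∈ s, (x i)^2 * Esym x (s.erase i) u
        ≤ c * (((u:ℝ)+1) * Esym x s (u+1)) := by
      rw [← Esym_L1 x s u, Finset.mul_sum]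
      refine Finset.sum_le_sum fun i hi => ?_
      have hE : 0 ≤ Esym x (s.erase i) u :=
        Esym_nonneg (fun r hr => hx r (Finset.mem_of_mem_erase hr)) u
      have : (x i)^2 ≤ c * x i := by nlinarith [hx i hi, hxc i hi]
      nlinarith
    have hkk : ((u:ℝ)+1+1) = (u:ℝ)+2 := by ring
    push_cast
    nlinarith [hmain, hb]

lemma sq_sum_le : ∀ n : ℕ, 2 ≤ n → ∑ i ∈ Icc 2 n, ((1:ℝ)/i)^2 ≤ 3/4 - 1/n := by
  intro n hn
  induction n, hn using Nat.le_induction with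
  | base => norm_num
  | succ n hn ih =>
    rw [Finset.sum_Icc_succ_top (by omega : 2 ≤ n + 1)]
    have hN : (0:ℝ) < n := by exact_mod_cast Nat.lt_of_lt_of_le Nat.zero_lt_two hn
    have key : ((1:ℝ)/(↑(n+1)))^2 ≤ 1/(n:ℝ) - 1/(↑(n+1)) := by
      push_cast
      rw [div_pow, one_pow, div_sub_div _ _ (ne_of_gt hN) (by positivity),
        div_le_div_iff₀ (by positivity) (by positivity)]
      nlinarith
    push_cast at key ⊢
    linarith

lemma key_ineq_s7 (n : ℕ) (hn : 1 ≤ n) (j : ℕ) (hj1 : 1 ≤ j)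
    (hj2 : (j : ℝ) ≤ (∑ r ∈ Icc 1 n, (1:ℝ)/r) / 2) :
    ((∑ r ∈ Icc 1 n, (1:ℝ)/r) - 1) * Esym (fun r => (1:ℝ)/r) (Icc 1 n) (j-1)
      ≤ (j:ℝ) * Esym (fun r => (1:ℝ)/r) (Icc 1 n) j := by
  classical
  set x : ℕ → ℝ := fun r => (1:ℝ)/r with hx_def
  set S : ℝ := ∑ r ∈ Icc 1 n, (1:ℝ)/r with hS_def
  have hx_pos : ∀ i ∈ Icc 1 n, 0 < x i := by
    intro i hi
    rw [Finset.mem_Icc] at hi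
    have : (0:ℝ) < i := by exact_mod_cast hi.1
    positivity
  have hx_nonneg : ∀ i ∈ Icc 1 n, 0 ≤ x i := fun i hi => (hx_pos i hi).le
  have hx_le1 : ∀ i ∈ Icc 1 n, x i ≤ 1 := by
    intro i hi
    rw [Finset.mem_Icc] at hi
    have h1 : (1:ℝ) ≤ i := by exact_mod_cast hi.1
    calc x i = 1/(i:ℝ) := rfl
      _ ≤ 1/1 := by apply div_le_div_of_nonneg_left <;> linarith
      _ = 1 := by norm_num
  have hsplit : Icc 1 n = insert 1 (Icc 2 n) := by
    ext r
    simp only [Finset.mem_Icc, Finset.mem_insert]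
    omega
  have h1notin : (1:ℕ) ∉ Icc 2 n := by simp
  have hsub : Icc 2 n ⊆ Icc 1 n := by
    rw [hsplit]; exact Finset.subset_insert _ _
  have hx1 : x 1 = 1 := by simp [hx_def]
  have hSx : ∑ i ∈ Icc 1 n, x i = S := rfl
  have hS' : ∑ i ∈ Icc 2 n, x i = S - 1 := by
    rw [← hSx, hsplit, Finset.sum_insert h1notin, hx1]; ring
  have hx_half : ∀ i ∈ Icc 2 n, x i ≤ 1/2 := by
    intro i hi
    rw [Finset.mem_Icc] at hi
    have h2 : (2:ℝ) ≤ i := by exact_mod_cast hi.1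
    calc x i = 1/(i:ℝ) := rfl
      _ ≤ 1/2 := by apply div_le_div_of_nonneg_left <;> linarith
  rcases Nat.lt_or_ge j 2 with hj | hj
  · -- case j = 1
    have hj1' : j = 1 := by omega
    subst hj1'
    have e0 : Esym x (Icc 1 n) (1-1) = 1 := Esym_zero x _
    have e1 : Esym x (Icc 1 n) 1 = S := by rw [Esym_one, hSx]
    rw [e0, e1]
    push_cast
    linarith
  · -- j ≥ 2
    obtain ⟨u, rfl⟩ : ∃ u, j = u + 2 := ⟨j - 2, by omega⟩
    have hj2' : (u:ℝ) + 2 ≤ S / 2 := by push_cast at hj2; linarith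
    have hS4 : 4 ≤ S := by linarith [Nat.cast_nonneg (α := ℝ) u]
    have hn2 : 2 ≤ n := by
      by_contra hc
      have hn1 : n = 1 := by omega
      subst hn1
      rw [hS_def] at hS4
      norm_num [Finset.Icc_self] at hS4
    have hq : ∑ i ∈ Icc 2 n, (x i)^2 ≤ 3/4 := by
      have h1 := sq_sum_le n hn2
      have h1n : (0:ℝ) < 1/(n:ℝ) := by positivity
      simp only [hx_def]
      linarith
    have hjm1 : u + 2 - 1 = u + 1 := rfl
    rw [hjm1]
    have hmain := Esym_main x (Icc 1 n) u
    rw [hSx] at hmain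
    have hbound : ∑ i ∈ Icc 1 n, (x i)^2 * Esym x ((Icc 1 n).erase i) u
        ≤ Esym x (Icc 1 n) (u+1) := by
      conv_lhs => rw [hsplit]
      rw [Finset.sum_insert h1notin]
      rw [Finset.erase_insert h1notin, hx1, one_pow, one_mul, ← hsplit]
      have hstep : ∑ i ∈ Icc 2 n, (x i)^2 * Esym x ((Icc 1 n).erase i) u
          ≤ (∑ i ∈ Icc 2 n, (x i)^2) * Esym x (Icc 1 n) u := by
        rw [Finset.sum_mul]
        refine Finset.sum_le_sum fun i hi => ?_
        have hmono : Esym x ((Icc 1 n).erase i) u ≤ Esym x (Icc 1 n) u :=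
          Esym_mono (Finset.erase_subset _ _) hx_nonneg u
        exact mul_le_mul_of_nonneg_left hmono (sq_nonneg _)
      have hEu_nonneg : 0 ≤ Esym x (Icc 1 n) u := Esym_nonneg hx_nonneg u
      have hq' : (∑ i ∈ Icc 2 n, (x i)^2) * Esym x (Icc 1 n) u
          ≤ (3/4) * Esym x (Icc 1 n) u := mul_le_mul_of_nonneg_right hq hEu_nonneg
      have hfin : Esym x (Icc 2 n) u + (3/4) * Esym x (Icc 1 n) u
          ≤ Esym x (Icc 1 n) (u+1) := by
        have hrec : Esym x (Icc 1 n) (u+1)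
            = Esym x (Icc 2 n) (u+1) + Esym x (Icc 2 n) u := by
          rw [hsplit, Esym_insert x h1notin u, hx1, one_mul]
        rcases Nat.eq_zero_or_pos u with hu0 | hu1
        · subst hu0
          rw [hrec]
          simp only [zero_add, Esym_zero, Esym_one, hS']
          linarith
        · obtain ⟨v, rfl⟩ : ∃ v, u = v + 1 := ⟨u - 1, by omega⟩
          have hrec' : Esym x (Icc 1 n) (v+1)
              = Esym x (Icc 2 n) (v+1) + Esym x (Icc 2 n) v := by
            rw [hsplit, Esym_insert x h1notin v, hx1, one_mul]
          rw [hrec, hrec']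
          have hx'_nonneg : ∀ i ∈ Icc 2 n, 0 ≤ x i := fun i hi => hx_nonneg i (hsub hi)
          have hA0 : 0 ≤ Esym x (Icc 2 n) v := Esym_nonneg hx'_nonneg v
          have hB0 : 0 ≤ Esym x (Icc 2 n) (v+1) := Esym_nonneg hx'_nonneg (v+1)
          have hC0 : 0 ≤ Esym x (Icc 2 n) (v+2) := Esym_nonneg hx'_nonneg (v+2)
          have hr1 := Esym_ratio hx'_nonneg hx_half (v+1)
          have hr2 := Esym_ratio hx'_nonneg hx_half v
          rw [hS'] at hr1 hr2
          push_cast at hr1 hr2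
          have hSv : 2*(v:ℝ) + 6 ≤ S := by push_cast at hj2'; linarith
          have h3B : 3 * Esym x (Icc 2 n) (v+1) ≤ 2 * Esym x (Icc 2 n) (v+2) := by
            nlinarith
          have h3A : 3 * Esym x (Icc 2 n) v ≤ 2 * Esym x (Icc 2 n) (v+1) := by
            nlinarith
          linarith
      calc Esym x (Icc 2 n) u + ∑ i ∈ Icc 2 n, (x i)^2 * Esym x ((Icc 1 n).erase i) u
          ≤ Esym x (Icc 2 n) u + (3/4) * Esym x (Icc 1 n) u := by linarith
        _ ≤ Esym x (Icc 1 n) (u+1) := hfin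
    push_cast at hmain ⊢
    linarith [hmain, hbound]

theorem stmt7 (m : ℕ) (hm : 2 ≤ m) (a : ℕ → ℝ)
    (ha : ∀ k : ℕ, a k = ∑ T ∈ (Finset.Icc 1 (m - 1)).powersetCard k,
      ∏ r ∈ T, (1 : ℝ) / r)
    (j : ℕ) (hj1 : 1 ≤ j)
    (hj2 : (j : ℝ) ≤ (∑ r ∈ Finset.Icc 1 (m - 1), (1 : ℝ) / r) / 2) :
    ((∑ r ∈ Finset.Icc 1 (m - 1), (1 : ℝ) / r) - 1) / j ≤ a j / a (j - 1) := by
  have hn : 1 ≤ m - 1 := by omega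
  set n := m - 1 with hndef
  have haE : ∀ k, a k = Esym (fun r => (1:ℝ)/r) (Icc 1 n) k := fun k => (ha k).trans rfl
  have hS_le : (∑ r ∈ Icc 1 n, (1:ℝ)/r) ≤ n := by
    calc ∑ r ∈ Icc 1 n, (1:ℝ)/r ≤ ∑ r ∈ Icc 1 n, 1 := by
          refine Finset.sum_le_sum fun i hi => ?_
          rw [Finset.mem_Icc] at hi
          have h1 : (1:ℝ) ≤ i := by exact_mod_cast hi.1
          rw [div_le_one (by linarith)]; linarith
      _ = ((Icc 1 n).card : ℝ) := by rw [Finset.sum_const]; simp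
      _ = n := by rw [Nat.card_Icc]; norm_num
  have hjn : j ≤ n := by
    by_contra hc
    push_neg at hc
    have h1 : (n:ℝ) < j := by exact_mod_cast hc
    have hn0 : (0:ℝ) ≤ n := Nat.cast_nonneg n
    linarith [hj2, hS_le]
  have hx_pos : ∀ i ∈ Icc 1 n, 0 < (fun r => (1:ℝ)/r) i := by
    intro i hi
    rw [Finset.mem_Icc] at hi
    have : (0:ℝ) < i := by exact_mod_cast hi.1
    positivity
  have hA : 0 < a (j-1) := by
    rw [haE]
    exact Esym_pos hx_pos (by rw [Nat.card_Icc]; omega)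
  have hj0 : 0 < (j:ℝ) := by exact_mod_cast hj1
  rw [div_le_div_iff₀ hj0 hA, haE j, haE (j-1)]
  have hkey := key_ineq_s7 n hn j hj1 hj2
  linarith
end

section
/- For every m ≥ 2 and 1 ≤ j ≤ m-1, the inequality h_{m-1}·a_{j-1} ≤ j·a_j + 2·a_{j-2} holds, where a_j is the j-th elementary symmetric polynomial of 1, 1/2, ..., 1/(m-1), a_{-1} = 0, and h_{m-1} = Σ_{r=1}^{m-1} 1/r. -/
open Finset

lemma sum_inv_sq_le_two (n : ℕ) : ∑ r ∈ Finset.Icc 1 n, ((1:ℝ)/r)^2 ≤ 2 := by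
  have h : ∀ n : ℕ, 1 ≤ n → ∑ r ∈ Finset.Icc 1 n, ((1:ℝ)/r)^2 ≤ 2 - 1/n := by
    intro n hn
    induction n with
    | zero => omega
    | succ k ih =>
      rcases Nat.eq_zero_or_pos k with hk | hk
      · subst hk; norm_num
      · have hsum := ih hk
        rw [Finset.sum_Icc_succ_top (by omega : 1 ≤ k + 1)]
        have hk0 : (0:ℝ) < k := by exact_mod_cast hk
        have hk1 : (0:ℝ) < (k:ℝ) + 1 := by linarith
        have hstep : ((1:ℝ)/(k+1))^2 ≤ 1/k - 1/(k+1) := by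
          rw [div_sub_div _ _ (ne_of_gt hk0) (ne_of_gt hk1)]
          rw [div_pow, one_pow, div_le_div_iff₀ (by positivity) (by positivity)]
          ring_nf
          nlinarith
        push_cast
        push_cast at hsum hstep
        linarith
  rcases Nat.eq_zero_or_pos n with h0 | h0
  · simp [h0]
  · have := h n h0
    have : (0:ℝ) ≤ 1/n := by positivity
    linarith [h n h0]

theorem stmt8 (m : ℕ) (hm : 2 ≤ m) (a : ℤ → ℝ)
    (ha0 : ∀ k : ℤ, k < 0 → a k = 0)
    (ha : ∀ k : ℕ, a k = ∑ T ∈ (Finset.Icc 1 (m - 1)).powersetCard k,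
      ∏ r ∈ T, (1 : ℝ) / r)
    (j : ℕ) (hj1 : 1 ≤ j) (hj2 : j ≤ m - 1) :
    (∑ r ∈ Finset.Icc 1 (m - 1), (1 : ℝ) / r) * a ((j : ℤ) - 1) ≤
      (j : ℝ) * a j + 2 * a ((j : ℤ) - 2) := by
  classical
  set S := Finset.Icc 1 (m-1) with hS
  set x : ℕ → ℝ := fun r => (1:ℝ)/r with hx
  have hx0 : ∀ r, 0 ≤ x r := fun r => by positivity
  have hprodnn : ∀ T : Finset ℕ, 0 ≤ ∏ r ∈ T, x r :=
    fun T => Finset.prod_nonneg fun i _ => hx0 i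
  have haj1 : a ((j:ℤ)-1) = ∑ T ∈ S.powersetCard (j-1), ∏ r ∈ T, x r := by
    have h1 : ((j:ℤ)-1) = ((j-1 : ℕ) : ℤ) := by omega
    rw [h1, ha]
  have haj : a (j:ℤ) = ∑ T ∈ S.powersetCard j, ∏ r ∈ T, x r := ha j
  -- Claim A
  have claimA : ∑ T ∈ S.powersetCard (j-1), ∑ r ∈ S \ T, x r * ∏ s ∈ T, x s
      = (j:ℝ) * ∑ U ∈ S.powersetCard j, ∏ r ∈ U, x r := by
    have hrhs : (j:ℝ) * ∑ U ∈ S.powersetCard j, ∏ r ∈ U, x r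
        = ∑ U ∈ S.powersetCard j, ∑ r ∈ U, x r * ∏ s ∈ U.erase r, x s := by
      rw [Finset.mul_sum]
      refine Finset.sum_congr rfl fun U hU => ?_
      rw [Finset.mem_powersetCard] at hU
      have : ∑ r ∈ U, x r * ∏ s ∈ U.erase r, x s = ∑ r ∈ U, ∏ s ∈ U, x s := by
        refine Finset.sum_congr rfl fun r hr => ?_
        rw [Finset.mul_prod_erase U x hr]
      rw [this, Finset.sum_const, hU.2, nsmul_eq_mul]
    rw [hrhs, Finset.sum_sigma' (S.powersetCard (j-1)) (fun T => S \ T)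
      (fun T r => x r * ∏ s ∈ T, x s),
      Finset.sum_sigma' (S.powersetCard j) (fun U => U)
      (fun U r => x r * ∏ s ∈ U.erase r, x s)]
    refine Finset.sum_bij' (fun p _ => ⟨insert p.2 p.1, p.2⟩)
      (fun p _ => ⟨p.1.erase p.2, p.2⟩) ?_ ?_ ?_ ?_ ?_
    · rintro ⟨T, r⟩ hp
      rw [Finset.mem_sigma, Finset.mem_powersetCard] at hp ⊢
      obtain ⟨⟨hTS, hTc⟩, hr⟩ := hp
      rw [Finset.mem_sdiff] at hr
      refine ⟨⟨Finset.insert_subset hr.1 hTS, ?_⟩, Finset.mem_insert_self _ _⟩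
      rw [Finset.card_insert_of_notMem hr.2, hTc]; omega
    · rintro ⟨U, r⟩ hp
      rw [Finset.mem_sigma, Finset.mem_powersetCard] at hp ⊢
      obtain ⟨⟨hUS, hUc⟩, hr⟩ := hp
      refine ⟨⟨(Finset.erase_subset _ _).trans hUS, ?_⟩, ?_⟩
      · rw [Finset.card_erase_of_mem hr, hUc]
      · rw [Finset.mem_sdiff]
        exact ⟨hUS hr, Finset.notMem_erase _ _⟩
    · rintro ⟨T, r⟩ hp
      rw [Finset.mem_sigma] at hp
      have : r ∉ T := (Finset.mem_sdiff.mp hp.2).2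
      simp [Finset.erase_insert this]
    · rintro ⟨U, r⟩ hp
      rw [Finset.mem_sigma] at hp
      simp [Finset.insert_erase hp.2]
    · rintro ⟨T, r⟩ hp
      rw [Finset.mem_sigma] at hp
      have : r ∉ T := (Finset.mem_sdiff.mp hp.2).2
      simp [Finset.erase_insert this]
  -- Claim B
  have claimB : ∑ T ∈ S.powersetCard (j-1), ∑ r ∈ T, x r * ∏ s ∈ T, x s
      ≤ 2 * a ((j:ℤ) - 2) := by
    rcases eq_or_lt_of_le hj1 with h1 | h1
    · -- j = 1
      have hj : j = 1 := h1.symm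
      subst hj
      have h0 : ((1:ℕ):ℤ) - 2 = (-1 : ℤ) := by norm_num
      rw [h0, ha0 (-1) (by norm_num)]
      simp
    · -- 2 ≤ j
      have hj2' : 2 ≤ j := h1
      have haj2 : a ((j:ℤ)-2) = ∑ T ∈ S.powersetCard (j-2), ∏ r ∈ T, x r := by
        have h2 : ((j:ℤ)-2) = ((j-2 : ℕ) : ℤ) := by omega
        rw [h2, ha]
      have step1 : ∑ T ∈ S.powersetCard (j-1), ∑ r ∈ T, x r * ∏ s ∈ T, x s
          = ∑ U ∈ S.powersetCard (j-2), ∑ r ∈ S \ U, x r ^ 2 * ∏ s ∈ U, x s := by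
        have heq : ∀ T ∈ S.powersetCard (j-1), ∑ r ∈ T, x r * ∏ s ∈ T, x s
            = ∑ r ∈ T, x r ^ 2 * ∏ s ∈ T.erase r, x s := by
          intro T hT
          refine Finset.sum_congr rfl fun r hr => ?_
          rw [← Finset.mul_prod_erase T x hr]; ring
        rw [Finset.sum_congr rfl heq,
          Finset.sum_sigma' (S.powersetCard (j-1)) (fun T => T)
            (fun T r => x r ^ 2 * ∏ s ∈ T.erase r, x s),
          Finset.sum_sigma' (S.powersetCard (j-2)) (fun U => S \ U)
            (fun U r => x r ^ 2 * ∏ s ∈ U, x s)]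
        refine Finset.sum_bij' (fun p _ => ⟨p.1.erase p.2, p.2⟩)
          (fun p _ => ⟨insert p.2 p.1, p.2⟩) ?_ ?_ ?_ ?_ ?_
        · rintro ⟨T, r⟩ hp
          rw [Finset.mem_sigma, Finset.mem_powersetCard] at hp ⊢
          obtain ⟨⟨hTS, hTc⟩, hr⟩ := hp
          refine ⟨⟨(Finset.erase_subset _ _).trans hTS, ?_⟩, ?_⟩
          · rw [Finset.card_erase_of_mem hr, hTc]; omega
          · rw [Finset.mem_sdiff]
            exact ⟨hTS hr, Finset.notMem_erase _ _⟩
        · rintro ⟨U, r⟩ hp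
          rw [Finset.mem_sigma, Finset.mem_powersetCard] at hp ⊢
          obtain ⟨⟨hUS, hUc⟩, hr⟩ := hp
          rw [Finset.mem_sdiff] at hr
          refine ⟨⟨Finset.insert_subset hr.1 hUS, ?_⟩, Finset.mem_insert_self _ _⟩
          rw [Finset.card_insert_of_notMem hr.2, hUc]; omega
        · rintro ⟨T, r⟩ hp
          rw [Finset.mem_sigma] at hp
          simp [Finset.insert_erase hp.2]
        · rintro ⟨U, r⟩ hp
          rw [Finset.mem_sigma] at hp
          have : r ∉ U := (Finset.mem_sdiff.mp hp.2).2
          simp [Finset.erase_insert this]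
        · rintro ⟨T, r⟩ hp
          rfl
      rw [step1, haj2, Finset.mul_sum]
      refine Finset.sum_le_sum fun U hU => ?_
      have h2 : ∑ r ∈ S \ U, x r ^ 2 ≤ 2 := by
        calc ∑ r ∈ S \ U, x r ^ 2 ≤ ∑ r ∈ S, x r ^ 2 :=
              Finset.sum_le_sum_of_subset_of_nonneg (Finset.sdiff_subset)
                (fun i _ _ => by positivity)
          _ ≤ 2 := sum_inv_sq_le_two (m-1)
      calc ∑ r ∈ S \ U, x r ^ 2 * ∏ s ∈ U, x s
          = (∑ r ∈ S \ U, x r ^ 2) * ∏ s ∈ U, x s := by rw [Finset.sum_mul]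
        _ ≤ 2 * ∏ s ∈ U, x s := mul_le_mul_of_nonneg_right h2 (hprodnn U)
  -- Assemble
  have key : (∑ r ∈ S, x r) * a ((j:ℤ)-1)
      = (j:ℝ) * a (j:ℤ) + ∑ T ∈ S.powersetCard (j-1), ∑ r ∈ T, x r * ∏ s ∈ T, x s := by
    rw [haj1, haj, Finset.sum_mul_sum]
    rw [Finset.sum_comm]
    have hsplit : ∀ T ∈ S.powersetCard (j-1),
        ∑ r ∈ S, x r * ∏ s ∈ T, x s
        = (∑ r ∈ S \ T, x r * ∏ s ∈ T, x s) + ∑ r ∈ T, x r * ∏ s ∈ T, x s := by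
      intro T hT
      rw [Finset.mem_powersetCard] at hT
      rw [Finset.sum_sdiff hT.1]
    rw [Finset.sum_congr rfl hsplit, Finset.sum_add_distrib, claimA]
  rw [key]
  linarith [claimB]
end

section
/- Let k ≥ 1, s = σ+it with 0 < σ < 1 and t^2 ≤ k, and let w > 0 be a real number. Then Re( ((k+2)/(k+s))·w + ((k+s+1)/(k+2))·(1/w) ) ≥ 2. -/
open Complex

set_option maxHeartbeats 800000 in
theorem stmt10 (k : ℕ) (hk : 1 ≤ k) (σ t : ℝ) (hσ0 : 0 < σ) (hσ1 : σ < 1)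
    (ht : t ^ 2 ≤ k) (s : ℂ) (hs : s = σ + t * Complex.I) (w : ℝ) (hw : 0 < w) :
    2 ≤ ((((k : ℂ) + 2) / ((k : ℂ) + s)) * (w : ℂ) +
        (((k : ℂ) + s + 1) / ((k : ℂ) + 2)) * (1 / (w : ℂ))).re := by
  subst hs
  have hK0 : (0:ℝ) ≤ (k:ℝ) := Nat.cast_nonneg k
  have hK1 : (1:ℝ) ≤ (k:ℝ) := by exact_mod_cast hk
  have hD : (0:ℝ) < ((k:ℝ) + σ)^2 + t^2 := by positivity
  have hDne : (((k:ℝ) + σ)^2 + t^2) ≠ 0 := hD.ne'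
  have h2 : (0:ℝ) < (k:ℝ) + 2 := by linarith
  have hre : ((((k : ℂ) + 2) / ((k : ℂ) + (σ + t * Complex.I))) * (w : ℂ) +
        (((k : ℂ) + (σ + t * Complex.I) + 1) / ((k : ℂ) + 2)) * (1 / (w : ℂ))).re
      = ((k:ℝ) + 2) * ((k:ℝ) + σ) / (((k:ℝ) + σ)^2 + t^2) * w
        + ((k:ℝ) + σ + 1) / ((k:ℝ) + 2) * (1/w) := by
    simp [Complex.div_re, Complex.normSq_apply, Complex.add_re, Complex.add_im,
      Complex.mul_re, Complex.mul_im, Complex.ofReal_re, Complex.ofReal_im]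
    rw [show ((k:ℝ)+σ)*((k:ℝ)+σ)+t*t = ((k:ℝ)+σ)^2+t^2 from by ring,
      mul_div_mul_right _ _ h2.ne']
  rw [hre]
  have heq : ((k:ℝ) + 2) * ((k:ℝ) + σ) / (((k:ℝ) + σ)^2 + t^2) * w
      + ((k:ℝ) + σ + 1) / ((k:ℝ) + 2) * (1/w) - 2
      = (((k:ℝ)+2)^2*((k:ℝ)+σ)*w^2 + ((k:ℝ)+σ+1)*(((k:ℝ)+σ)^2+t^2)
          - 2*(((k:ℝ)+σ)^2+t^2)*((k:ℝ)+2)*w)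
        / ((((k:ℝ)+σ)^2+t^2)*((k:ℝ)+2)*w) := by
    field_simp
  have hDle : ((k:ℝ)+σ)^2+t^2 ≤ ((k:ℝ)+σ)*((k:ℝ)+σ+1) := by nlinarith
  have hnum : 0 ≤ ((k:ℝ)+2)^2*((k:ℝ)+σ)*w^2 + ((k:ℝ)+σ+1)*(((k:ℝ)+σ)^2+t^2)
      - 2*(((k:ℝ)+σ)^2+t^2)*((k:ℝ)+2)*w := by
    nlinarith [sq_nonneg (((k:ℝ)+σ)*(((k:ℝ)+2)*w) - (((k:ℝ)+σ)^2+t^2)),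
      mul_nonneg hD.le (sub_nonneg.2 hDle), hσ0, hD]
  have hfrac := div_nonneg hnum (by positivity : (0:ℝ) ≤ ((((k:ℝ)+σ)^2+t^2)*((k:ℝ)+2)*w))
  linarith [heq ▸ hfrac]
end

section
/- Let m be a natural number, a_k = a_{m-1,k} the coefficients of Π_{r=1}^{m-1}(1+x/r), and for complex s set v_k = (k+1)a_k/((k+s)a_{k-1}). If s = σ + it with 0 < σ < 1 and |t| < (1/2)√(log m), then |(v_k + 1)(1 + 1/v_{k+1})| ≥ 4 for all 1 ≤ k ≤ m-2. -/
open Complex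

open Finset

noncomputable def Es (f : ℕ → ℝ) (s : Finset ℕ) (k : ℕ) : ℝ :=
  ∑ T ∈ s.powersetCard k, ∏ r ∈ T, f r

lemma Es_zero (f : ℕ → ℝ) (s : Finset ℕ) : Es f s 0 = 1 := by
  simp [Es]

lemma Es_of_card_lt (f : ℕ → ℝ) {s : Finset ℕ} {k : ℕ} (h : s.card < k) :
    Es f s k = 0 := by
  simp [Es, Finset.powersetCard_eq_empty.2 h]

lemma Es_nonneg (f : ℕ → ℝ) (hf : ∀ i, 0 ≤ f i) (s : Finset ℕ) (k : ℕ) :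
    0 ≤ Es f s k :=
  Finset.sum_nonneg fun T _ => Finset.prod_nonneg fun i _ => hf i

lemma Es_pos (f : ℕ → ℝ) {s : Finset ℕ} (hf : ∀ i ∈ s, 0 < f i) {k : ℕ}
    (hk : k ≤ s.card) : 0 < Es f s k := by
  obtain ⟨T, hT⟩ := Finset.powersetCard_nonempty.2 hk
  refine Finset.sum_pos' (fun T _ => Finset.prod_nonneg fun i hi => ?_) ⟨T, hT, ?_⟩
  · rcases Finset.mem_powersetCard.1 ‹T ∈ s.powersetCard k› with ⟨hs, _⟩
    exact (hf i (hs hi)).le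
  · exact Finset.prod_pos fun i hi =>
      hf i ((Finset.mem_powersetCard.1 hT).1 hi)

lemma Es_one (f : ℕ → ℝ) (s : Finset ℕ) : Es f s 1 = ∑ r ∈ s, f r := by
  simp [Es, Finset.powersetCard_one, Finset.sum_map]

lemma Es_insert (f : ℕ → ℝ) {x : ℕ} {s : Finset ℕ} (hx : x ∉ s) (k : ℕ) :
    Es f (insert x s) (k + 1) = Es f s (k + 1) + f x * Es f s k := by
  unfold Es
  rw [Finset.powersetCard_succ_insert hx, Finset.sum_union, Finset.mul_sum,
    Finset.sum_image]
  · congr 1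
    refine Finset.sum_congr rfl fun T hT => ?_
    have hxT : x ∉ T := fun h => hx ((Finset.mem_powersetCard.1 hT).1 h)
    rw [Finset.prod_insert hxT]
  · intro T hT T' hT' hins
    have h1 : x ∉ T := fun h => hx ((Finset.mem_powersetCard.1 hT).1 h)
    have h2 : x ∉ T' := fun h => hx ((Finset.mem_powersetCard.1 hT').1 h)
    rw [← Finset.erase_insert h1, hins, Finset.erase_insert h2]
  · rw [Finset.disjoint_left]
    intro T hT hT'
    rcases Finset.mem_image.1 hT' with ⟨T', _, rfl⟩
    exact hx ((Finset.mem_powersetCard.1 hT).1 (Finset.mem_insert_self x T'))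

lemma Es_succ_zero (f : ℕ → ℝ) (hf : ∀ i, 0 ≤ f i) {s : Finset ℕ} {k : ℕ}
    (h : Es f s k = 0) : Es f s (k + 1) = 0 := by
  unfold Es at h ⊢
  have hall : ∀ T ∈ s.powersetCard k, ∏ r ∈ T, f r = 0 :=
    (Finset.sum_eq_zero_iff_of_nonneg
      (fun T _ => Finset.prod_nonneg fun i _ => hf i)).1 h
  refine Finset.sum_eq_zero fun S hS => ?_
  obtain ⟨hSs, hcard⟩ := Finset.mem_powersetCard.1 hS
  have hne : S.Nonempty := Finset.card_pos.1 (by omega)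
  obtain ⟨x, hxS⟩ := hne
  rw [← Finset.mul_prod_erase S f hxS]
  have herase : ∏ r ∈ S.erase x, f r = 0 := by
    refine hall _ (Finset.mem_powersetCard.2 ⟨(Finset.erase_subset x S).trans hSs, ?_⟩)
    rw [Finset.card_erase_of_mem hxS, hcard]; omega
  rw [herase, mul_zero]

lemma Es_lower (f : ℕ → ℝ) (hf : ∀ i, 0 ≤ f i) (s : Finset ℕ) :
    ∀ k : ℕ, Es f s 1 * Es f s (k + 1) - (∑ r ∈ s, f r ^ 2) * Es f s k
      ≤ ((k : ℝ) + 2) * Es f s (k + 2) := by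
  induction s using Finset.induction_on with
  | empty =>
    intro k
    have h1 : Es f (∅ : Finset ℕ) 1 = 0 := Es_of_card_lt f (by simp)
    have h2 : Es f (∅ : Finset ℕ) (k + 2) = 0 := Es_of_card_lt f (by simp)
    rw [h1, h2]
    simp
  | @insert y s hy ih =>
    intro k
    have hE1 : Es f (insert y s) 1 = Es f s 1 + f y := by
      rw [Es_insert f hy 0, Es_zero, mul_one]
    have hQ : ∑ r ∈ insert y s, f r ^ 2 = f y ^ 2 + ∑ r ∈ s, f r ^ 2 :=
      Finset.sum_insert hy
    rcases k with _ | j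
    · have h0 := ih 0
      norm_num [Es_zero] at h0
      rw [hE1, hQ, Es_insert f hy 1]
      simp only [Es_zero, show (1:ℕ)+1 = 2 from rfl]
      push_cast
      nlinarith [h0]
    · have hj := ih j
      have hj1 := ih (j + 1)
      simp only [show j+1+1 = j+2 from rfl, show j+1+2 = j+3 from rfl,
        show j+2+1 = j+3 from rfl] at hj1
      push_cast at hj1
      have hEj : 0 ≤ Es f s j := Es_nonneg f hf s j
      have hfy := hf y
      rw [hE1, hQ, Es_insert f hy (j + 2), Es_insert f hy (j + 1), Es_insert f hy j]
      simp only [show j+1+1 = j+2 from rfl, show j+1+2 = j+3 from rfl,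
        show j+2+1 = j+3 from rfl]
      push_cast
      nlinarith [hj1, mul_le_mul_of_nonneg_left hj hfy,
        mul_nonneg (mul_nonneg (mul_nonneg hfy hfy) hfy) hEj]

lemma Es_newton (f : ℕ → ℝ) (hf : ∀ i, 0 ≤ f i) (s : Finset ℕ) :
    ∀ k : ℕ, ((k : ℝ) + 2) * Es f s k * Es f s (k + 2)
      ≤ ((k : ℝ) + 1) * Es f s (k + 1) ^ 2 := by
  induction s using Finset.induction_on with
  | empty =>
    intro k
    have h2 : Es f (∅ : Finset ℕ) (k + 2) = 0 := Es_of_card_lt f (by simp)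
    rw [h2, mul_zero]
    positivity
  | @insert y s hy ih =>
    intro k
    have hfy := hf y
    rcases k with _ | j
    · have h0 := ih 0
      norm_num [Es_zero] at h0
      rw [Es_insert f hy 1, Es_insert f hy 0]
      simp only [Es_zero, show (1:ℕ)+1 = 2 from rfl]
      push_cast
      nlinarith [h0, sq_nonneg (f y), Es_nonneg f hf s 1]
    · have hj := ih j
      have hj1 := ih (j + 1)
      simp only [show j+1+1 = j+2 from rfl, show j+1+2 = j+3 from rfl,
        show j+2+1 = j+3 from rfl] at hj1
      push_cast at hj1
      push_cast at hj hj1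
      set E0 := Es f s j with hE0
      set E1 := Es f s (j + 1) with hE1d
      set E2 := Es f s (j + 2) with hE2d
      set E3 := Es f s (j + 3) with hE3d
      have h0 : 0 ≤ E0 := Es_nonneg f hf s j
      have h1 : 0 ≤ E1 := Es_nonneg f hf s (j + 1)
      have h2 : 0 ≤ E2 := Es_nonneg f hf s (j + 2)
      have h3 : 0 ≤ E3 := Es_nonneg f hf s (j + 3)
      have hjc : (0 : ℝ) ≤ (j : ℝ) := Nat.cast_nonneg j
      -- (iii) : (j+3) E0 E2 ≤ (j+2) E1^2
      have hE02 : E0 * E2 ≤ E1 ^ 2 := by nlinarith [hj, hjc, sq_nonneg E1]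
      have hiii : ((j : ℝ) + 3) * (E0 * E2) ≤ ((j : ℝ) + 2) * E1 ^ 2 := by
        nlinarith [hj, hE02]
      -- (ii) cross : (j+3) E0 E3 ≤ (j+1) E1 E2
      have hcross : ((j : ℝ) + 3) * (E0 * E3) ≤ ((j : ℝ) + 1) * (E1 * E2) := by
        rcases eq_or_lt_of_le (mul_nonneg h1 h2) with hz | hpos
        · have hz3 : E3 = 0 := by
            rcases mul_eq_zero.1 hz.symm with h | h
            · exact Es_succ_zero f hf (Es_succ_zero f hf h)
            · exact Es_succ_zero f hf h
          rw [hz3, mul_zero, mul_zero]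
          positivity
        · have key := mul_le_mul hj hj1 (by positivity) (by positivity)
          have expand : ((j:ℝ) + 2) * E0 * E2 * (((j:ℝ) + 1 + 2) * E1 * E3)
              = (((j:ℝ)+2) * (E1 * E2)) * (((j:ℝ)+3) * (E0 * E3)) := by ring
          have expand2 : ((j:ℝ) + 1) * E1 ^ 2 * (((j:ℝ) + 1 + 1) * E2 ^ 2)
              = (((j:ℝ)+2) * (E1 * E2)) * (((j:ℝ)+1) * (E1 * E2)) := by ring
          rw [expand, expand2] at key
          exact le_of_mul_le_mul_left key (by positivity)
      rw [Es_insert f hy (j + 2), Es_insert f hy (j + 1), Es_insert f hy j]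
      simp only [show j+1+1 = j+2 from rfl, show j+1+2 = j+3 from rfl,
        show j+2+1 = j+3 from rfl]
      push_cast
      nlinarith [hj1, mul_le_mul_of_nonneg_left hcross hfy,
        mul_le_mul_of_nonneg_left hiii (mul_nonneg hfy hfy)]

lemma re_lem1 (c P Pm t x : ℝ) (hPm : Pm ≠ 0) (hD : 0 < x^2 + t^2) (z : ℂ)
    (hz : z = (c : ℂ) * (P:ℂ) / (((x:ℂ) + (t:ℂ)*Complex.I) * (Pm:ℂ))) :
    z.re = (c*P/Pm) * (x/(x^2 + t^2)) := by
  rw [hz, Complex.div_re]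
  simp [Complex.mul_re, Complex.mul_im, Complex.normSq_mul, Complex.normSq_ofReal,
    Complex.normSq_apply]
  have hPm2 : 0 < Pm^2 := by rcases hPm.lt_or_gt with h|h <;> nlinarith
  have h2 : x*Pm*(x*Pm) + t*Pm*(t*Pm) ≠ 0 := by nlinarith [mul_pos hPm2 hD]
  field_simp [h2]

lemma re_lem2 (x t P Pp c : ℝ) (z : ℂ)
    (hz : z = (c : ℂ) * (Pp:ℂ) / (((x:ℂ) + (t:ℂ)*Complex.I) * (P:ℂ))) :
    (1/z).re = (P/(c*Pp)) * x := by
  rw [hz, one_div_div]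
  have : ((x:ℂ) + (t:ℂ)*Complex.I) * (P:ℂ) / ((c:ℂ) * (Pp:ℂ))
      = ((P/(c*Pp) : ℝ) : ℂ) * ((x:ℂ) + (t:ℂ)*Complex.I) := by
    push_cast
    field_simp
  rw [this, Complex.re_ofReal_mul]
  simp

lemma sum_inv_sq_le (n : ℕ) :
    ∑ r ∈ Finset.Icc 1 n, ((1:ℝ) / r) ^ 2 ≤ 2 - 2 / (n + 1) := by
  induction n with
  | zero => norm_num
  | succ n ih =>
    rw [Finset.sum_Icc_succ_top (by omega : 1 ≤ n + 1)]
    have h1 : (0:ℝ) < (n:ℝ) + 1 := by positivity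
    have h2 : (0:ℝ) < (n:ℝ) + 2 := by positivity
    have hkey : ((1:ℝ) / ((n:ℝ) + 1)) ^ 2 ≤ 2 / ((n:ℝ) + 1) - 2 / ((n:ℝ) + 2) := by
      rw [div_sub_div _ _ (ne_of_gt h1) (ne_of_gt h2), div_pow,
        div_le_div_iff₀ (by positivity) (by positivity)]
      nlinarith [sq_nonneg ((n:ℝ)+1), h1.le]
    push_cast at ih ⊢
    have h3 : (n:ℝ) + 1 + 1 = (n:ℝ) + 2 := by ring
    rw [h3]
    linarith [ih, hkey]

lemma log_le_sum_inv (n : ℕ) :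
    Real.log ((n:ℝ) + 1) ≤ ∑ r ∈ Finset.Icc 1 n, (1:ℝ) / r := by
  have h := log_add_one_le_harmonic n
  rw [harmonic_eq_sum_Icc] at h
  push_cast at h
  simpa [one_div] using h

set_option maxHeartbeats 1000000 in
theorem stmt12 (m : ℕ) (a : ℕ → ℝ)
    (ha : ∀ k : ℕ, a k = ∑ T ∈ (Finset.Icc 1 (m - 1)).powersetCard k,
      ∏ r ∈ T, (1 : ℝ) / r)
    (σ t : ℝ) (hσ0 : 0 < σ) (hσ1 : σ < 1)
    (ht : |t| < (1 / 2) * Real.sqrt (Real.log m))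
    (s : ℂ) (hs : s = σ + t * Complex.I)
    (v : ℕ → ℂ)
    (hv : ∀ k : ℕ, v k = ((k : ℂ) + 1) * (a k : ℂ) / (((k : ℂ) + s) * (a (k - 1) : ℂ))) :
    ∀ k : ℕ, 1 ≤ k → k ≤ m - 2 →
      4 ≤ ‖(v k + 1) * (1 + 1 / v (k + 1))‖ := by
  intro k hk1 hk2
  by_cases hm3 : m < 3
  · exfalso
    interval_cases m
    · rw [Nat.cast_zero, Real.log_zero, Real.sqrt_zero, mul_zero] at ht
      exact absurd ht (not_lt.2 (abs_nonneg t))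
    · rw [Nat.cast_one, Real.log_one, Real.sqrt_zero, mul_zero] at ht
      exact absurd ht (not_lt.2 (abs_nonneg t))
    · omega
  push_neg at hm3
  obtain ⟨j, rfl⟩ : ∃ j, k = j + 1 := ⟨k - 1, by omega⟩
  set n := m - 1 with hn
  have hjn : j + 2 ≤ n := by omega
  set f : ℕ → ℝ := fun r => (1:ℝ) / r with hfdef
  have hf0 : ∀ i, 0 ≤ f i := fun i => by positivity
  have hfS : ∀ i ∈ Finset.Icc 1 n, 0 < f i := by
    intro i hi
    rw [Finset.mem_Icc] at hi
    have h1 : (0:ℝ) < (i:ℝ) := by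
      exact_mod_cast Nat.lt_of_lt_of_le Nat.zero_lt_one hi.1
    simp only [hfdef]
    positivity
  have haE : ∀ i, a i = Es f (Finset.Icc 1 n) i := fun i => ha i
  have hcard : (Finset.Icc 1 n).card = n := by rw [Nat.card_Icc]; omega
  have hapos : ∀ i, i ≤ n → 0 < a i := by
    intro i hi
    rw [haE i]
    exact Es_pos f hfS (by rw [hcard]; exact hi)
  have hanonneg : ∀ i, 0 ≤ a i := fun i => (haE i) ▸ Es_nonneg f hf0 _ i
  have ha0 : a 0 = 1 := by rw [haE 0]; exact Es_zero f _
  obtain ⟨H, hH⟩ : ∃ H : ℝ, H = a 1 := ⟨_, rfl⟩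
  have hHsum : H = ∑ r ∈ Finset.Icc 1 n, f r := by rw [hH, haE 1]; exact Es_one f _
  have hmcast : (m:ℝ) = (n:ℝ) + 1 := by
    have h1 : m = n + 1 := by omega
    rw [h1]; push_cast; ring
  have hlogH : Real.log m ≤ H := by
    rw [hmcast, hHsum]; exact log_le_sum_inv n
  have hL0 : 0 ≤ Real.log m := by
    apply Real.log_nonneg
    have h1 : ((3:ℕ):ℝ) ≤ (m:ℝ) := by exact_mod_cast hm3
    push_cast at h1
    linarith only [h1]
  have ht2 : t ^ 2 < Real.log m / 4 := by
    have h1 : |t| * |t| < (1/2 * Real.sqrt (Real.log m)) * (1/2 * Real.sqrt (Real.log m)) :=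
      mul_self_lt_mul_self (abs_nonneg t) ht
    have h2 : Real.sqrt (Real.log m) * Real.sqrt (Real.log m) = Real.log m :=
      Real.mul_self_sqrt hL0
    rw [abs_mul_abs_self] at h1
    nlinarith only [h1, h2]
  have ht2H : 4 * t ^ 2 < H := by linarith only [ht2, hlogH]
  have hQ2 : ∑ r ∈ Finset.Icc 1 n, f r ^ 2 ≤ 2 := by
    have h1 := sum_inv_sq_le n
    have h3 : 0 < 2 / ((n:ℝ)+1) := by positivity
    simp only [hfdef]
    linarith only [h1, h3]
  have hlower : ∀ i : ℕ, H * a (i+1) - 2 * a i ≤ ((i:ℝ) + 2) * a (i+2) := by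
    intro i
    have h1 := Es_lower f hf0 (Finset.Icc 1 n) i
    rw [← haE, ← haE, ← haE, ← haE] at h1
    rw [← hH] at h1
    have hQ0 : 0 ≤ ∑ r ∈ Finset.Icc 1 n, f r ^ 2 :=
      Finset.sum_nonneg fun r _ => sq_nonneg _
    nlinarith only [hanonneg i, hQ2, h1, hQ0]
  have hchain : ∀ i : ℕ, 2 * ((i:ℝ) + 1) ≤ H + 1 →
      (H - 1) * a i ≤ ((i:ℝ) + 1) * a (i+1) := by
    intro i
    induction i with
    | zero =>
      intro _
      rw [ha0, hH, show (0:ℕ)+1 = 1 from rfl]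
      push_cast
      linarith only []
    | succ i ih =>
      intro hcond
      push_cast at hcond
      have h0 : (0:ℝ) ≤ (i:ℝ) := Nat.cast_nonneg i
      have hcond' : 2 * ((i:ℝ) + 1) ≤ H + 1 := by linarith only [hcond]
      have hih := ih hcond'
      have hlow := hlower i
      have hH1 : (1:ℝ) < H := by linarith only [hcond, h0]
      have h2a : 2 * a i ≤ a (i+1) := by
        nlinarith only [hih, hanonneg (i+1), hanonneg i, hH1,
          (by linarith only [hcond] : (0:ℝ) ≤ H - 1 - 2*((i:ℝ)+1))]
      push_cast
      rw [show i + 1 + 1 = i + 2 from rfl]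
      nlinarith only [hlow, h2a, hanonneg i]
  -- real quantities
  have hjcast : (0:ℝ) ≤ (j:ℝ) := Nat.cast_nonneg j
  obtain ⟨Pm, hPmdef⟩ : ∃ x : ℝ, x = a j := ⟨_, rfl⟩
  obtain ⟨P, hPdef⟩ : ∃ x : ℝ, x = a (j+1) := ⟨_, rfl⟩
  obtain ⟨Pp, hPpdef⟩ : ∃ x : ℝ, x = a (j+2) := ⟨_, rfl⟩
  have hPm : 0 < Pm := hPmdef ▸ hapos j (by omega)
  have hP : 0 < P := hPdef ▸ hapos (j+1) (by omega)
  have hPp : 0 < Pp := hPpdef ▸ hapos (j+2) (by omega)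
  obtain ⟨u, hudef⟩ : ∃ x : ℝ, x = (j:ℝ) + 1 + σ := ⟨_, rfl⟩
  obtain ⟨D, hDdef⟩ : ∃ x : ℝ, x = u ^ 2 + t ^ 2 := ⟨_, rfl⟩
  have hu0 : 0 < u := by rw [hudef]; linarith only [hjcast, hσ0]
  have hu1 : 1 < u := by rw [hudef]; linarith only [hjcast, hσ0]
  have huk : (j:ℝ) + 1 ≤ u := by rw [hudef]; linarith only [hσ0]
  have huk2 : u ≤ (j:ℝ) + 2 := by rw [hudef]; linarith only [hσ1]
  have hD : 0 < D := by rw [hDdef]; nlinarith only [mul_pos hu0 hu0, sq_nonneg t]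
  obtain ⟨X, hXdef⟩ : ∃ x : ℝ, x = (((j:ℝ) + 2) * P / Pm) * (u / D) := ⟨_, rfl⟩
  obtain ⟨Y, hYdef⟩ : ∃ x : ℝ, x = (P / (((j:ℝ) + 3) * Pp)) * (u + 1) := ⟨_, rfl⟩
  have hj2 : (0:ℝ) < (j:ℝ) + 2 := by linarith only [hjcast]
  have hj3 : (0:ℝ) < (j:ℝ) + 3 := by linarith only [hjcast]
  have hXpos : 0 < X := hXdef ▸ mul_pos (div_pos (mul_pos hj2 hP) hPm) (div_pos hu0 hD)
  have hYpos : 0 < Y := hYdef ▸ mul_pos (div_pos hP (mul_pos hj3 hPp))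
    (by linarith only [hu0])
  have hNewt : ((j:ℝ) + 2) * Pm * Pp ≤ ((j:ℝ) + 1) * P ^ 2 := by
    have h1 := Es_newton f hf0 (Finset.Icc 1 n) j
    rw [← haE, ← haE, ← haE, ← hPmdef, ← hPdef, ← hPpdef] at h1
    exact h1
  -- complex computations
  have hz1 : v (j+1) = ((((j:ℝ)+2) : ℝ) : ℂ) * (P:ℂ) /
      (((u:ℂ) + (t:ℂ)*Complex.I) * (Pm:ℂ)) := by
    rw [hv (j+1), hs, show (j+1-1 : ℕ) = j from rfl, hPdef, hPmdef, hudef]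
    push_cast
    ring
  have hre1 : (v (j+1)).re = X := by
    rw [hXdef, hDdef]
    exact re_lem1 _ _ _ _ _ (ne_of_gt hPm)
      (by nlinarith only [mul_pos hu0 hu0, sq_nonneg t]) _ hz1
  have hz2 : v (j+2) = ((((j:ℝ)+3) : ℝ) : ℂ) * (Pp:ℂ) /
      ((((u+1 : ℝ):ℂ) + (t:ℂ)*Complex.I) * (P:ℂ)) := by
    rw [hv (j+2), hs, show (j+2-1 : ℕ) = j+1 from rfl, hPdef, hPpdef, hudef]
    push_cast
    ring
  have hre2 : (1 / v (j+2)).re = Y := by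
    rw [hYdef]
    have h1 := re_lem2 (u+1) t P Pp ((j:ℝ)+3) _ hz2
    rw [h1]
  -- abs lower bounds
  have habs1 : 1 + X ≤ ‖v (j+1) + 1‖ := by
    have h1 := Complex.re_le_norm (v (j+1) + 1)
    rw [Complex.add_re, Complex.one_re, hre1] at h1
    linarith only [h1]
  have habs2 : 1 + Y ≤ ‖1 + 1 / v (j+2)‖ := by
    have h1 := Complex.re_le_norm (1 + 1 / v (j+2))
    rw [Complex.add_re, Complex.one_re, hre2] at h1
    linarith only [h1]
  -- the key real inequality
  have hXYeq : X * Y = ((((j:ℝ)+2) * P * u) * (P * (u+1))) /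
      ((Pm * D) * (((j:ℝ)+3) * Pp)) := by
    rw [hXdef, hYdef]
    field_simp
  have MAIN : 4 ≤ (1 + X) * (1 + Y) := by
    rcases le_or_gt (t ^ 2) ((j:ℝ) + 1) with hbr | hbr
    · -- branch 1 : t² ≤ j+1
      have key : ((j:ℝ)+1) * ((j:ℝ)+3) * D ≤ ((j:ℝ)+2)^2 * u * (u+1) := by
        rw [hDdef]
        nlinarith only [mul_nonneg (sq_nonneg ((j:ℝ)+2))
          (by linarith only [hbr, huk] : (0:ℝ) ≤ u - t^2), sq_nonneg u, sq_nonneg t]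
      have hxy : (Pm * D) * (((j:ℝ)+3) * Pp) ≤ (((j:ℝ)+2) * P * u) * (P * (u+1)) := by
        have hkR : (0:ℝ) < (j:ℝ) + 1 := by linarith only [hjcast]
        refine le_of_mul_le_mul_left ?_ hkR
        nlinarith only [mul_le_mul_of_nonneg_right key (le_of_lt (mul_pos hPm hPp)),
          mul_le_mul_of_nonneg_left hNewt
            (mul_nonneg (mul_nonneg hj2.le hu0.le)
              (by linarith only [hu0] : (0:ℝ) ≤ u + 1))]
      have hXY1 : 1 ≤ X * Y := by
        rw [hXYeq, le_div_iff₀ (mul_pos (mul_pos hPm hD) (mul_pos hj3 hPp))]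
        linarith only [hxy]
      have hXYsum : 2 ≤ X + Y := by
        nlinarith only [sq_nonneg (X - Y), hXY1, hXpos, hYpos]
      nlinarith only [hXY1, hXYsum]
    · -- branch 2 : j+1 < t²
      have hH4 : 4 < H := by linarith only [ht2H, hbr, hjcast]
      have hch : (H - 1) * Pm ≤ ((j:ℝ)+1) * P := by
        rw [hPmdef, hPdef]
        apply hchain j
        linarith only [ht2H, hbr]
      have hx_lb : (H-1) * (u+1) * Pm ≤ ((j:ℝ)+2) * P * u := by
        nlinarith only [mul_le_mul_of_nonneg_left hch
            (by linarith only [hu0] : (0:ℝ) ≤ u + 1),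
          mul_nonneg (by linarith only [huk] : (0:ℝ) ≤ u - ((j:ℝ)+1)) hP.le]
      have hXeq : X = (((j:ℝ)+2) * P * u) / (Pm * D) := by
        rw [hXdef]
        field_simp
      have hXlb : (H-1) * (u+1) / D ≤ X := by
        rw [hXeq, div_le_div_iff₀ hD (mul_pos hPm hD)]
        nlinarith only [mul_le_mul_of_nonneg_right hx_lb hD.le]
      have hxy2 : ((((j:ℝ)+3) * Pm * Pp) * (u * (u+1))) ≤
          ((((j:ℝ)+2) * P * u) * (P * (u+1))) := by
        have hkR : (0:ℝ) < (j:ℝ) + 1 := by linarith only [hjcast]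
        refine le_of_mul_le_mul_left ?_ hkR
        nlinarith only [mul_le_mul_of_nonneg_left hNewt
            (mul_nonneg (mul_nonneg hj2.le hu0.le)
              (by linarith only [hu0] : (0:ℝ) ≤ u + 1)),
          mul_nonneg (mul_nonneg hu0.le (by linarith only [hu0] : (0:ℝ) ≤ u + 1))
            (mul_nonneg hPm.le hPp.le)]
      have hXYlb : u * (u+1) / D ≤ X * Y := by
        rw [hXYeq, div_le_div_iff₀ hD (mul_pos (mul_pos hPm hD) (mul_pos hj3 hPp))]
        nlinarith only [mul_le_mul_of_nonneg_right hxy2 hD.le]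
      have hpoly : 3 * D ≤ (u+1) * (H - 1 + u) := by
        rw [hDdef]
        nlinarith only [
          mul_nonneg (by linarith only [huk2, hbr] : (0:ℝ) ≤ t^2 + 1 - u) hu0.le,
          mul_nonneg (by linarith only [ht2H] : (0:ℝ) ≤ H - 4*t^2) hu0.le,
          (by linarith only [ht2H] : (0:ℝ) ≤ H - 4*t^2),
          mul_nonneg (by linarith only [hH4] : (0:ℝ) ≤ H - 4)
            (by linarith only [hu0] : (0:ℝ) ≤ 2*u + 1)]
      have hsum3 : 3 ≤ ((H-1)*(u+1))/D + (u*(u+1))/D := by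
        rw [← add_div, le_div_iff₀ hD]
        nlinarith only [hpoly]
      nlinarith only [hXlb, hXYlb, hYpos, hsum3]
  have hfinal : (1 + X) * (1 + Y) ≤
      ‖v (j+1) + 1‖ * ‖1 + 1 / v (j+2)‖ := by
    apply mul_le_mul habs1 habs2 (by linarith only [hYpos]) (norm_nonneg _)
  have hmm : ‖v (j+1) + 1‖ * ‖1 + 1 / v (j+2)‖
      = ‖(v (j+1) + 1) * (1 + 1 / v (j+1+1))‖ := by
    rw [show j+1+1 = j+2 from rfl, ← norm_mul]
  linarith only [MAIN, hfinal, le_of_eq hmm]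
end

section
/- If s is real with 0 < s < 1, and (a_k) is a positive logarithmically concave sequence (so a_k/a_{k-1} is decreasing), then with v_k = (k+1)a_k/((k+s)a_{k-1}) the sequence (v_k) is decreasing, and (v_k+1)(1+1/v_{k+1}) ≥ 4 for all k ≥ 1. -/
theorem stmt13 (s : ℝ) (hs0 : 0 < s) (hs1 : s < 1) (a : ℕ → ℝ)
    (hpos : ∀ k, 0 < a k)
    (hlc : ∀ k : ℕ, 1 ≤ k → a (k - 1) * a (k + 1) ≤ (a k) ^ 2)
    (v : ℕ → ℝ)
    (hv : ∀ k : ℕ, v k = ((k : ℝ) + 1) * a k / (((k : ℝ) + s) * a (k - 1))) :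
    (∀ k : ℕ, 1 ≤ k → v (k + 1) ≤ v k) ∧
      (∀ k : ℕ, 1 ≤ k → 4 ≤ (v k + 1) * (1 + 1 / v (k + 1))) := by
  have hvpos : ∀ k : ℕ, 0 < v k := by
    intro k
    rw [hv]
    have h1 := hpos k
    have h2 := hpos (k - 1)
    have hk : (0:ℝ) ≤ (k:ℝ) := Nat.cast_nonneg k
    positivity
  have hdec : ∀ k : ℕ, 1 ≤ k → v (k + 1) ≤ v k := by
    intro k hk
    rw [hv, hv]
    have h1 : (k + 1 : ℕ) - 1 = k := by omega
    rw [h1]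
    have hlck := hlc k hk
    have hak := hpos k
    have hak1 := hpos (k + 1)
    have hakm := hpos (k - 1)
    have hkc : (0:ℝ) ≤ (k:ℝ) := Nat.cast_nonneg k
    have hks : (0:ℝ) < (k:ℝ) + s := by positivity
    have hks1 : (0:ℝ) < (k:ℝ) + 1 + s := by linarith
    push_cast
    rw [div_le_div_iff₀ (by positivity) (by positivity)]
    have hcoef : ((k:ℝ) + 1 + 1) * ((k:ℝ) + s) ≤ ((k:ℝ) + 1) * ((k:ℝ) + 1 + s) := by
      nlinarith
    have hprod : (((k:ℝ) + 1 + 1) * ((k:ℝ) + s)) * (a (k - 1) * a (k + 1)) ≤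
        (((k:ℝ) + 1) * ((k:ℝ) + 1 + s)) * (a k ^ 2) :=
      mul_le_mul hcoef hlck (by positivity) (by positivity)
    nlinarith [hprod]
  refine ⟨hdec, ?_⟩
  intro k hk
  have h1 := hdec k hk
  have hp := hvpos (k + 1)
  have hpk := hvpos k
  have hinv : v (k + 1) * (1 / v (k + 1)) = 1 := by
    field_simp
  have h2 : 2 ≤ v (k + 1) + 1 / v (k + 1) := by
    nlinarith [sq_nonneg (v (k + 1) - 1), hinv, hp]
  have hnn : (0:ℝ) ≤ 1 + 1 / v (k + 1) := by positivity
  nlinarith [mul_le_mul_of_nonneg_right h1 hnn, hinv]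
end

section
/- For every real r > 0, the power series coefficients (d_k(r)) of z ↦ r^2(1-z)/sinh^2(r√(1-z)/2) form a logarithmically concave sequence: d_k(r)^2 ≥ d_{k-1}(r)·d_{k+1}(r) for all k ≥ 1. -/
set_option maxHeartbeats 1000000

open Finset

namespace Stmt17Aux

def conv (a b : ℕ → ℝ) (n : ℕ) : ℝ := ∑ i ∈ Finset.range (n+1), a i * b (n - i)

def ext (a : ℕ → ℝ) (n : ℤ) : ℝ := if 0 ≤ n then a n.toNat else 0

def Pos (a : ℕ → ℝ) : Prop := ∀ k, 0 < a k

def LogConc (a : ℕ → ℝ) : Prop := ∀ k, a k * a (k+2) ≤ a (k+1)^2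

lemma ext_nonneg {a : ℕ → ℝ} (ha : Pos a) (n : ℤ) : 0 ≤ ext a n := by
  unfold ext; split
  · exact (ha _).le
  · exact le_refl 0

lemma ext_ofNat (a : ℕ → ℝ) (n : ℕ) : ext a n = a n := by
  simp [ext]

lemma ratio {a : ℕ → ℝ} (ha : Pos a) (la : LogConc a) :
    ∀ i j, i ≤ j → a (j+1) * a i ≤ a (i+1) * a j := by
  intro i j h
  induction j, h using Nat.le_induction with
  | base => rw [mul_comm]
  | succ j hij IH =>
    have h1 := la j
    nlinarith [ha j, ha (j+1), ha i, ha (i+1), ha (j+2),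
      mul_le_mul_of_nonneg_left h1 (ha i).le,
      mul_le_mul_of_nonneg_right IH (ha (j+1)).le]

lemma step {a : ℕ → ℝ} (ha : Pos a) (la : LogConc a) :
    ∀ u v : ℤ, u ≤ v → ext a (u-1) * ext a (v+1) ≤ ext a u * ext a v := by
  intro u v huv
  by_cases h : 0 ≤ u - 1
  · obtain ⟨i, hi⟩ : ∃ i : ℕ, u = (i : ℤ) + 1 := ⟨(u-1).toNat, by omega⟩
    obtain ⟨j, hj⟩ : ∃ j : ℕ, v = (j : ℤ) := ⟨v.toNat, by omega⟩
    have hij : i ≤ j := by omega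
    subst hi hj
    have e1 : ((i : ℤ) + 1 - 1) = ((i : ℕ) : ℤ) := by ring
    have e2 : ((j : ℤ) + 1) = ((j+1 : ℕ) : ℤ) := by push_cast; ring
    have e3 : ((i : ℤ) + 1) = ((i+1 : ℕ) : ℤ) := by push_cast; ring
    rw [e1, e2, e3, ext_ofNat, ext_ofNat, ext_ofNat, ext_ofNat]
    calc a i * a (j+1) = a (j+1) * a i := by ring
    _ ≤ a (i+1) * a j := ratio ha la i j hij
  · have : ext a (u-1) = 0 := by unfold ext; rw [if_neg h]
    rw [this, zero_mul]
    exact mul_nonneg (ext_nonneg ha u) (ext_nonneg ha v)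

lemma conv_pos {a b : ℕ → ℝ} (ha : Pos a) (hb : Pos b) : Pos (conv a b) := by
  intro n
  apply Finset.sum_pos
  · intro i _; exact mul_pos (ha i) (hb _)
  · exact ⟨0, by simp⟩

lemma rep0 {a b : ℕ → ℝ} (m K : ℕ) (hK : m + 1 ≤ K) :
    ∑ p ∈ Finset.range K, ext a ((m : ℤ) - p) * ext b p = conv a b m := by
  rw [conv]
  rw [← Finset.sum_subset (Finset.range_subset_range.mpr hK)
    (by intro p _ hp
        rw [Finset.mem_range, not_lt] at hp
        have : ext a ((m : ℤ) - p) = 0 := by unfold ext; rw [if_neg]; omega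
        rw [this, zero_mul])]
  rw [← Finset.sum_range_reflect (fun i => a i * b (m - i)) (m+1)]
  apply Finset.sum_congr rfl
  intro p hp
  rw [Finset.mem_range] at hp
  have h1 : ((m : ℤ) - p) = ((m - p : ℕ) : ℤ) := by omega
  have h2 : m + 1 - 1 - p = m - p := by omega
  have h3 : m - (m - p) = p := by omega
  rw [h1, h2, h3, ext_ofNat, ext_ofNat]

lemma rep1 {a b : ℕ → ℝ} (m K : ℕ) (hK : m + 2 ≤ K) :
    ∑ p ∈ Finset.range K, ext a ((m : ℤ) + 1 - p) * ext b ((p : ℤ) - 1) = conv a b m := by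
  obtain ⟨K', rfl⟩ : ∃ K', K = K' + 1 := ⟨K - 1, by omega⟩
  rw [Finset.sum_range_succ']
  have h0 : ext b (((0:ℕ) : ℤ) - 1) = 0 := by unfold ext; rw [if_neg]; omega
  rw [h0, mul_zero, add_zero, ← rep0 m K' (by omega)]
  apply Finset.sum_congr rfl
  intro p _
  congr 2 <;> (push_cast; ring)

lemma antisym_sum (K : ℕ) (H : ℕ → ℕ → ℝ) (hd : ∀ p, H p p = 0)
    (hs : ∀ p q, p < q → 0 ≤ H p q + H q p) :
    0 ≤ ∑ p ∈ range K, ∑ q ∈ range K, H p q := by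
  induction K with
  | zero => simp
  | succ K IH =>
    have expand : ∑ p ∈ range (K+1), ∑ q ∈ range (K+1), H p q
        = (∑ p ∈ range K, ∑ q ∈ range K, H p q)
          + (∑ p ∈ range K, (H p K + H K p)) + H K K := by
      rw [Finset.sum_range_succ, Finset.sum_range_succ]
      have : ∀ p ∈ range K, ∑ q ∈ range (K+1), H p q
          = (∑ q ∈ range K, H p q) + H p K := by
        intro p _; rw [Finset.sum_range_succ]
      rw [Finset.sum_congr rfl this, Finset.sum_add_distrib, Finset.sum_add_distrib]
      ring
    rw [expand, hd K, add_zero]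
    have h2 : 0 ≤ ∑ p ∈ range K, (H p K + H K p) :=
      Finset.sum_nonneg fun p hp => hs p K (Finset.mem_range.mp hp)
    linarith

theorem conv_logconc {a b : ℕ → ℝ} (ha : Pos a) (hb : Pos b)
    (la : LogConc a) (lb : LogConc b) : LogConc (conv a b) := by
  intro k
  have e1 : ∑ p ∈ range (k+3), ext a ((k:ℤ)+1-p) * ext b p = conv a b (k+1) := by
    rw [← rep0 (k+1) (k+3) (by omega)]
    apply Finset.sum_congr rfl; intro p _; congr 2 <;> (push_cast; ring)
  have e2 : ∑ q ∈ range (k+3), ext a ((k:ℤ)+2-q) * ext b ((q:ℤ)-1) = conv a b (k+1) := by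
    rw [← rep1 (k+1) (k+3) (by omega)]
    apply Finset.sum_congr rfl; intro q _; congr 2 <;> (push_cast; ring)
  have e3 : ∑ p ∈ range (k+3), ext a ((k:ℤ)+1-p) * ext b ((p:ℤ)-1) = conv a b k := by
    exact rep1 k (k+3) (by omega)
  have e4 : ∑ q ∈ range (k+3), ext a ((k:ℤ)+2-q) * ext b q = conv a b (k+2) := by
    rw [← rep0 (k+2) (k+3) (by omega)]
    apply Finset.sum_congr rfl; intro q _; congr 2 <;> (push_cast; ring)
  have claim1 : (∑ p ∈ range (k+3), ∑ q ∈ range (k+3),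
        (ext a ((k:ℤ)+1-p) * ext a ((k:ℤ)+2-q)) *
          (ext b p * ext b ((q:ℤ)-1) - ext b ((p:ℤ)-1) * ext b q))
      = conv a b (k+1) * conv a b (k+1) - conv a b k * conv a b (k+2) := by
    have expand : (∑ p ∈ range (k+3), ∑ q ∈ range (k+3),
        (ext a ((k:ℤ)+1-p) * ext a ((k:ℤ)+2-q)) *
          (ext b p * ext b ((q:ℤ)-1) - ext b ((p:ℤ)-1) * ext b q))
        = (∑ p ∈ range (k+3), ext a ((k:ℤ)+1-p) * ext b p) *
            (∑ q ∈ range (k+3), ext a ((k:ℤ)+2-q) * ext b ((q:ℤ)-1)) -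
          (∑ p ∈ range (k+3), ext a ((k:ℤ)+1-p) * ext b ((p:ℤ)-1)) *
            (∑ q ∈ range (k+3), ext a ((k:ℤ)+2-q) * ext b q) := by
      rw [Finset.sum_mul_sum, Finset.sum_mul_sum, ← Finset.sum_sub_distrib]
      apply Finset.sum_congr rfl; intro p _
      rw [← Finset.sum_sub_distrib]
      apply Finset.sum_congr rfl; intro q _
      ring
    rw [expand, e1, e2, e3, e4]
  have key : 0 ≤ conv a b (k+1) * conv a b (k+1) - conv a b k * conv a b (k+2) := by
    rw [← claim1]
    apply antisym_sum
    · intro p; ring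
    · intro p q hpq
      have hfact : (ext a ((k:ℤ)+1-p) * ext a ((k:ℤ)+2-q)) *
            (ext b p * ext b ((q:ℤ)-1) - ext b ((p:ℤ)-1) * ext b q)
          + (ext a ((k:ℤ)+1-q) * ext a ((k:ℤ)+2-p)) *
            (ext b q * ext b ((p:ℤ)-1) - ext b ((q:ℤ)-1) * ext b p)
          = (ext a ((k:ℤ)+1-p) * ext a ((k:ℤ)+2-q)
              - ext a ((k:ℤ)+1-q) * ext a ((k:ℤ)+2-p)) *
            (ext b p * ext b ((q:ℤ)-1) - ext b ((p:ℤ)-1) * ext b q) := by ring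
      rw [hfact]
      apply mul_nonneg
      · have hstep := step ha la ((k:ℤ)+2-q) ((k:ℤ)+1-p) (by
          have : (p:ℤ) < q := by exact_mod_cast hpq
          omega)
        have u1 : (k:ℤ)+2-q-1 = (k:ℤ)+1-q := by ring
        have u2 : (k:ℤ)+1-p+1 = (k:ℤ)+2-p := by ring
        rw [u1, u2] at hstep
        nlinarith [hstep]
      · have hstep := step hb lb (p:ℤ) ((q:ℤ)-1) (by
          have : (p:ℤ) < q := by exact_mod_cast hpq
          omega)
        have u1 : (q:ℤ)-1+1 = (q:ℤ) := by ring
        rw [u1] at hstep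
        linarith
  have := conv_pos ha hb
  nlinarith [key]


def geomsq (t : ℝ) : ℕ → ℝ := fun k => ((k:ℝ)+1) * t^k

def qs (t : ℕ → ℝ) : ℕ → ℕ → ℝ
  | 0 => fun k => if k = 0 then 1 else 0
  | N+1 => conv (qs t N) (geomsq (t N))

lemma geomsq_pos {t : ℝ} (ht : 0 < t) : Pos (geomsq t) := by
  intro k
  exact mul_pos (by positivity) (pow_pos ht k)

lemma geomsq_logconc {t : ℝ} (ht : 0 ≤ t) : LogConc (geomsq t) := by
  intro k
  unfold geomsq
  push_cast
  rw [show k+2 = (k+1)+1 from rfl, pow_succ, pow_succ]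
  nlinarith [sq_nonneg (t^k * t)]

lemma qs_nonneg {t : ℕ → ℝ} (ht : ∀ j, 0 ≤ t j) : ∀ N k, 0 ≤ qs t N k := by
  intro N
  induction N with
  | zero => intro k; unfold qs; split <;> norm_num
  | succ N IH =>
    intro k
    show 0 ≤ conv (qs t N) (geomsq (t N)) k
    apply Finset.sum_nonneg
    intro i _
    exact mul_nonneg (IH i) (mul_nonneg (by positivity) (pow_nonneg (ht N) _))

lemma qs_pos {t : ℕ → ℝ} (ht : ∀ j, 0 < t j) : ∀ N, Pos (qs t (N+1)) ∧ LogConc (qs t (N+1)) := by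
  intro N
  induction N with
  | zero =>
    have : qs t 1 = geomsq (t 0) := by
      funext n
      show conv (qs t 0) (geomsq (t 0)) n = _
      unfold conv
      rw [Finset.sum_eq_single 0]
      · show (if (0:ℕ) = 0 then (1:ℝ) else 0) * _ = _
        simp
      · intro i _ hi
        show (if i = 0 then (1:ℝ) else 0) * _ = 0
        rw [if_neg hi, zero_mul]
      · intro h; simp at h
    rw [this]
    exact ⟨geomsq_pos (ht 0), geomsq_logconc (ht 0).le⟩
  | succ N IH =>
    constructor
    · exact conv_pos IH.1 (geomsq_pos (ht (N+1)))
    · exact conv_logconc IH.1 (geomsq_pos (ht (N+1))) IH.2 (geomsq_logconc (ht (N+1)).le)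

lemma qs_mono {t : ℕ → ℝ} (ht : ∀ j, 0 ≤ t j) (k : ℕ) :
    Monotone (fun N => qs t N k) := by
  apply monotone_nat_of_le_succ
  intro N
  show qs t N k ≤ conv (qs t N) (geomsq (t N)) k
  unfold conv
  have hk : k ∈ Finset.range (k+1) := by simp
  calc qs t N k = qs t N k * geomsq (t N) (k - k) := by
        simp [geomsq]
  _ ≤ ∑ i ∈ Finset.range (k+1), qs t N i * geomsq (t N) (k - i) := by
        apply Finset.single_le_sum (f := fun i => qs t N i * geomsq (t N) (k - i)) _ hk
        intro i _
        exact mul_nonneg (qs_nonneg ht N i)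
          (mul_nonneg (by positivity) (pow_nonneg (ht N) _))

lemma hasSum_geomsq {t z : ℝ} (h : |t * z| < 1) :
    HasSum (fun k : ℕ => geomsq t k * z^k) (((1 - t*z)⁻¹)^2) := by
  have hn : ‖t * z‖ < 1 := h
  have h1 := hasSum_coe_mul_geometric_of_norm_lt_one (𝕜 := ℝ) hn
  have h2 := hasSum_geometric_of_norm_lt_one hn
  have h3 := h1.add h2
  have hne : (1 : ℝ) - t*z ≠ 0 := by
    intro hc
    have : |t * z| = 1 := by rw [show t*z = 1 by linarith]; simp
    linarith
  have hval : t*z/(1-t*z)^2 + (1-t*z)⁻¹ = ((1 - t*z)⁻¹)^2 := by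
    field_simp
    ring
  rw [hval] at h3
  apply h3.congr_fun
  intro k
  unfold geomsq
  rw [mul_pow]
  push_cast
  ring

lemma norm_coef_mul_pow {a : ℝ} (ha : 0 ≤ a) (z : ℝ) (k : ℕ) :
    ‖a * z^k‖ = a * |z|^k := by
  rw [Real.norm_eq_abs, abs_mul, abs_of_nonneg ha, abs_pow]

lemma qs_hasSum {t : ℕ → ℝ} (ht0 : ∀ j, 0 ≤ t j) (ht1 : ∀ j, t j < 1) :
    ∀ N (z : ℝ), |z| < 1 →
      HasSum (fun k => qs t N k * z^k) (∏ j ∈ Finset.range N, ((1 - t j * z)⁻¹)^2) := by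
  intro N
  induction N with
  | zero =>
    intro z hz
    rw [Finset.range_zero, Finset.prod_empty]
    have : (fun k : ℕ => qs t 0 k * z^k) = fun k => if k = 0 then 1 else 0 := by
      funext k
      show (if k = 0 then (1:ℝ) else 0) * z^k = _
      by_cases h : k = 0 <;> simp [h]
    rw [this]
    exact hasSum_ite_eq 0 1
  | succ N IH =>
    intro z hz
    have htz : ∀ j, |t j * z| < 1 := by
      intro j
      rw [abs_mul, abs_of_nonneg (ht0 j)]
      calc t j * |z| ≤ 1 * |z| := by
            apply mul_le_mul_of_nonneg_right (ht1 j).le (abs_nonneg z)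
      _ < 1 := by rwa [one_mul]
    -- summable norms
    have habs : |(|z|)| < 1 := by rwa [abs_abs]
    have hfn : Summable (fun k => ‖qs t N k * z^k‖) := by
      have := (IH (|z|) habs).summable
      apply Summable.congr this
      intro k
      rw [norm_coef_mul_pow (qs_nonneg ht0 N k)]
    have hgn : Summable (fun k => ‖geomsq (t N) k * z^k‖) := by
      have h' : abs (t N * abs z) < 1 := by
        rw [abs_mul, abs_abs, ← abs_mul]
        exact htz N
      have := (hasSum_geomsq h').summable
      apply Summable.congr this
      intro k
      rw [norm_coef_mul_pow (show (0:ℝ) ≤ geomsq (t N) k from mul_nonneg (by positivity) (pow_nonneg (ht0 N) k))]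
    have hmul := hasSum_sum_range_mul_of_summable_norm hfn hgn
    rw [(IH z hz).tsum_eq, (hasSum_geomsq (htz N)).tsum_eq] at hmul
    have : (∏ j ∈ Finset.range N, ((1 - t j * z)⁻¹)^2) * ((1 - t N * z)⁻¹)^2
        = ∏ j ∈ Finset.range (N+1), ((1 - t j * z)⁻¹)^2 := by
      rw [Finset.prod_range_succ]
    rw [this] at hmul
    apply hmul.congr_fun
    intro n
    show conv (qs t N) (geomsq (t N)) n * z^n = _
    unfold conv
    rw [Finset.sum_mul]
    apply Finset.sum_congr rfl
    intro i hi
    rw [Finset.mem_range] at hi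
    have : z^i * z^(n-i) = z^n := by
      rw [← pow_add]
      congr 1
      omega
    calc qs t N i * geomsq (t N) (n - i) * z ^ n
        = (qs t N i * z^i) * (geomsq (t N) (n-i) * z^(n-i)) := by rw [← this]; ring
    _ = _ := rfl


open Real Filter Topology in
lemma qs_bound {t : ℕ → ℝ} (ht0 : ∀ j, 0 ≤ t j) (ht1 : ∀ j, t j < 1)
    {ρ : ℝ} (hρ0 : 0 ≤ ρ) (hρ1 : ρ < 1) {S : ℝ}
    (hS : ∀ N, ∑ j ∈ Finset.range N, t j / (1 - t j) ≤ S) :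
    ∀ N k, qs t N k * ρ^k ≤ Real.exp (2*S) := by
  intro N k
  have h1 : qs t N k * ρ^k ≤ ∏ j ∈ Finset.range N, ((1 - t j * ρ)⁻¹)^2 := by
    apply le_hasSum (qs_hasSum ht0 ht1 N ρ (by rwa [abs_of_nonneg hρ0])) k
    intro j _
    exact mul_nonneg (qs_nonneg ht0 N j) (pow_nonneg hρ0 _)
  have h2 : ∀ j, ((1 - t j * ρ)⁻¹)^2 ≤ Real.exp (2 * (t j / (1 - t j))) := by
    intro j
    have hd1 : 0 < 1 - t j := by linarith [ht1 j]
    have hd2 : t j * ρ ≤ t j := by nlinarith [ht0 j]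
    have hd3 : 0 < 1 - t j * ρ := by linarith
    have e1 : (1 - t j * ρ)⁻¹ ≤ (1 - t j)⁻¹ := inv_anti₀ hd1 (by linarith)
    have e2 : (1 - t j)⁻¹ ≤ Real.exp (t j / (1 - t j)) := by
      have := Real.add_one_le_exp (t j / (1 - t j))
      have heq : t j / (1 - t j) + 1 = (1 - t j)⁻¹ := by field_simp; ring
      linarith [heq ▸ this]
    have e3 : (1 - t j * ρ)⁻¹ ≤ Real.exp (t j / (1 - t j)) := e1.trans e2
    calc ((1 - t j * ρ)⁻¹)^2 ≤ (Real.exp (t j / (1 - t j)))^2 := by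
          apply pow_le_pow_left₀ (by positivity) e3
    _ = Real.exp (2 * (t j / (1 - t j))) := by
          rw [← Real.exp_nat_mul]
          norm_num [mul_comm]
  have h3 : ∏ j ∈ Finset.range N, ((1 - t j * ρ)⁻¹)^2
      ≤ ∏ j ∈ Finset.range N, Real.exp (2 * (t j / (1 - t j))) := by
    apply Finset.prod_le_prod
    · intro j _; positivity
    · intro j _; exact h2 j
  have h4 : ∏ j ∈ Finset.range N, Real.exp (2 * (t j / (1 - t j)))
      = Real.exp (∑ j ∈ Finset.range N, 2 * (t j / (1 - t j))) := by
    rw [Real.exp_sum]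
  have h5 : (∑ j ∈ Finset.range N, 2 * (t j / (1 - t j))) ≤ 2*S := by
    rw [← Finset.mul_sum]
    nlinarith [hS N]
  calc qs t N k * ρ^k ≤ _ := h1
  _ ≤ _ := h3
  _ = _ := h4
  _ ≤ Real.exp (2*S) := Real.exp_le_exp.mpr h5

open Real Filter Topology in
lemma sinh_prod (x : ℝ) :
    Tendsto (fun n : ℕ => x * ∏ j ∈ Finset.range n, (1 + x^2/(π^2*((j:ℝ)+1)^2)))
      atTop (𝓝 (Real.sinh x)) := by
  have hπ : (π:ℂ) ≠ 0 := by exact_mod_cast Real.pi_ne_zero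
  have h := Complex.tendsto_euler_sin_prod (x*Complex.I/π)
  have e0 : (π:ℂ) * (x*Complex.I/π) = x*Complex.I := by field_simp
  have efac : ∀ j : ℕ, (1:ℂ) - (x*Complex.I/π)^2/((j:ℂ)+1)^2
      = (((1 + x^2/(π^2*((j:ℝ)+1)^2) : ℝ)) : ℂ) := by
    intro j
    have hj : ((j:ℂ)+1) ≠ 0 := Nat.cast_add_one_ne_zero j
    push_cast
    rw [div_pow, mul_pow, Complex.I_sq]
    field_simp
    try ring
  have key : ∀ n : ℕ, (π:ℂ) * (x*Complex.I/π) *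
        ∏ j ∈ Finset.range n, ((1:ℂ) - (x*Complex.I/π)^2/((j:ℂ)+1)^2)
      = (((x * ∏ j ∈ Finset.range n, (1 + x^2/(π^2*((j:ℝ)+1)^2)) : ℝ)) : ℂ) * Complex.I := by
    intro n
    rw [e0, Finset.prod_congr rfl (fun j _ => efac j)]
    push_cast
    ring
  have h2 : Tendsto (fun n : ℕ =>
      (((x * ∏ j ∈ Finset.range n, (1 + x^2/(π^2*((j:ℝ)+1)^2)) : ℝ)) : ℂ) * Complex.I)
      atTop (𝓝 (Complex.sin ((π:ℂ) * (x*Complex.I/π)))) := by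
    apply h.congr
    intro n
    exact key n
  rw [e0, Complex.sin_mul_I, ← Complex.ofReal_sinh] at h2
  have h3 := (Complex.continuous_im.tendsto _).comp h2
  simp only [Function.comp_def, Complex.mul_I_im, Complex.ofReal_re] at h3
  exact h3

open Filter Topology in
lemma coeff_unique {e : ℕ → ℝ}
    (h : ∀ z : ℝ, |z| < 1 → HasSum (fun k => e k * z^k) 0) : ∀ m, e m = 0 := by
  obtain ⟨M, hM0, hM⟩ : ∃ M, 0 ≤ M ∧ ∀ k, |e k| * (1/4)^k ≤ M := by
    have ht : Tendsto (fun k => e k * (1/4:ℝ)^k) atTop (𝓝 0) :=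
      (h (1/4) (by rw [abs_of_nonneg] <;> norm_num)).summable.tendsto_atTop_zero
    have ht' : Tendsto (fun k => |e k * (1/4:ℝ)^k|) atTop (𝓝 0) := by
      have := ht.abs
      rwa [abs_zero] at this
    obtain ⟨M, hM⟩ := ht'.bddAbove_range
    refine ⟨M, ?_, fun k => ?_⟩
    · exact le_trans (abs_nonneg _) (hM ⟨0, rfl⟩)
    · have := hM ⟨k, rfl⟩
      simpa only [abs_mul, abs_pow, abs_of_nonneg (by norm_num : (0:ℝ) ≤ 1/4)] using this
  have hMk : ∀ k, |e k| ≤ M * 4^k := by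
    intro k
    have := hM k
    have h4 : ((1:ℝ)/4)^k = (4^k)⁻¹ := by
      rw [one_div, inv_pow]
    rw [h4] at this
    have h4p : (0:ℝ) < 4^k := by positivity
    calc |e k| = |e k| * (4^k)⁻¹ * 4^k := by field_simp
    _ ≤ M * 4^k := by nlinarith
  intro m
  induction m using Nat.strong_induction_on with
  | _ m IH =>
  have key : ∀ z : ℝ, 0 < z → z ≤ 1/16 → |e m| * z^m ≤ (2 * M * 4^(m+1)) * z^(m+1) := by
    intro z hz0 hz16
    have hz1 : |z| < 1 := by rw [abs_of_pos hz0]; linarith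
    have hz4 : 4*z ≤ 1/2 := by linarith
    have hsum := h z hz1
    -- head vanishes
    have hhead : ∑ i ∈ Finset.range (m+1), e i * z^i = e m * z^m := by
      rw [Finset.sum_range_succ]
      rw [Finset.sum_eq_zero, zero_add]
      intro i hi
      rw [IH i (Finset.mem_range.mp hi), zero_mul]
    have htail : HasSum (fun n => e (n+(m+1)) * z^(n+(m+1))) (0 - ∑ i ∈ Finset.range (m+1), e i * z^i) :=
      (hasSum_nat_add_iff' (m+1)).mpr hsum
    rw [hhead, zero_sub] at htail
    -- bound the tail
    have hb : ∀ n : ℕ, ‖e (n+(m+1)) * z^(n+(m+1))‖ ≤ (M * 4^(m+1) * z^(m+1)) * (4*z)^n := by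
      intro n
      rw [Real.norm_eq_abs, abs_mul, abs_pow, abs_of_pos hz0]
      calc |e (n+(m+1))| * z^(n+(m+1)) ≤ M * 4^(n+(m+1)) * z^(n+(m+1)) := by
            apply mul_le_mul_of_nonneg_right (hMk _) (by positivity)
      _ = (M * 4^(m+1) * z^(m+1)) * (4*z)^n := by
            rw [pow_add, pow_add, mul_pow]
            ring
    have hgeo : Summable (fun n : ℕ => (M * 4^(m+1) * z^(m+1)) * (4*z)^n) := by
      apply Summable.mul_left
      apply summable_geometric_of_lt_one (by positivity)
      linarith
    have hsn : Summable (fun n => ‖e (n+(m+1)) * z^(n+(m+1))‖) :=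
      Summable.of_nonneg_of_le (fun n => norm_nonneg _) hb hgeo
    have habs : |e m * z^m| ≤ ∑' n, ‖e (n+(m+1)) * z^(n+(m+1))‖ := by
      have := norm_tsum_le_tsum_norm hsn
      rw [htail.tsum_eq] at this
      rwa [Real.norm_eq_abs, abs_neg] at this
    have htsle : (∑' n, ‖e (n+(m+1)) * z^(n+(m+1))‖)
        ≤ ∑' n, (M * 4^(m+1) * z^(m+1)) * (4*z)^n :=
      Summable.tsum_le_tsum hb hsn hgeo
    have htsval : (∑' n : ℕ, (M * 4^(m+1) * z^(m+1)) * (4*z)^n)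
        = (M * 4^(m+1) * z^(m+1)) * (1 - 4*z)⁻¹ := by
      rw [tsum_mul_left, tsum_geometric_of_lt_one (by positivity) (by linarith)]
    have hinv : (1 - 4*z)⁻¹ ≤ 2 := by
      rw [show (2:ℝ) = (1/2)⁻¹ by norm_num]
      apply inv_anti₀ <;> linarith
    have : |e m * z^m| ≤ (M * 4^(m+1) * z^(m+1)) * 2 := by
      have h2' : (M * 4^(m+1) * z^(m+1)) * (1 - 4*z)⁻¹ ≤ (M * 4^(m+1) * z^(m+1)) * 2 :=
        mul_le_mul_of_nonneg_left hinv (by positivity)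
      linarith [habs, htsle, htsval ▸ h2']
    calc |e m| * z^m = |e m * z^m| := by rw [abs_mul, abs_pow, abs_of_pos hz0]
    _ ≤ (2 * M * 4^(m+1)) * z^(m+1) := by linarith
  -- conclude e m = 0
  by_contra hne
  have hpos : 0 < |e m| := abs_pos.mpr hne
  set C := 2 * M * 4^(m+1) with hC
  have hCpos : 0 < C + 1 := by positivity
  set z := min (1/16 : ℝ) (|e m| / (2 * (C+1))) with hzdef
  have hz0 : 0 < z := lt_min (by norm_num) (by positivity)
  have hz16 : z ≤ 1/16 := min_le_left _ _
  have hz2 : z ≤ |e m| / (2*(C+1)) := min_le_right _ _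
  have := key z hz0 hz16
  have hzpow : 0 < z^m := pow_pos hz0 m
  have h1 : |e m| ≤ C * z := by
    have : |e m| * z^m ≤ C * z * z^m := by
      calc |e m| * z^m ≤ C * z^(m+1) := this
      _ = C * z * z^m := by ring
    exact le_of_mul_le_mul_right this hzpow
  have h2 : C * z ≤ C * (|e m| / (2*(C+1))) :=
    mul_le_mul_of_nonneg_left hz2 (by positivity)
  have h3 : C * (|e m| / (2*(C+1))) < |e m| := by
    rw [div_eq_mul_inv]
    have hlt : C < C + 1 := by linarith
    have : C * (|e m| * (2*(C+1))⁻¹) = |e m| * (C / (2*(C+1))) := by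
      field_simp
    rw [this]
    have hfrac : C / (2*(C+1)) < 1 := by
      rw [div_lt_one (by positivity)]
      linarith
    nlinarith
  linarith

end Stmt17Aux

open Stmt17Aux Real Filter Topology in
theorem stmt17 (r : ℝ) (hr : 0 < r) (d : ℕ → ℝ)
    (hd : ∀ z : ℝ, |z| < 1 → HasSum (fun k : ℕ => d k * z ^ k)
      (r ^ 2 * (1 - z) / (Real.sinh (r * Real.sqrt (1 - z) / 2)) ^ 2)) :
    ∀ k : ℕ, 1 ≤ k → d (k - 1) * d (k + 1) ≤ (d k) ^ 2 := by
  intro k hk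
  obtain ⟨m, rfl⟩ : ∃ m, k = m + 1 := ⟨k - 1, by omega⟩
  -- setup
  set B : ℝ := r^2/4 with hBdef
  have hBpos : 0 < B := by positivity
  set p : ℕ → ℝ := fun j => π^2*((j:ℝ)+1)^2 with hpdef
  have hppos : ∀ j, 0 < p j := by
    intro j
    have := Real.pi_pos
    positivity
  set t : ℕ → ℝ := fun j => B / (B + p j) with htdef
  have ht0 : ∀ j, 0 < t j := fun j => div_pos hBpos (by linarith [hppos j])
  have ht0' : ∀ j, 0 ≤ t j := fun j => (ht0 j).le
  have ht1 : ∀ j, t j < 1 := by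
    intro j
    rw [div_lt_one (by linarith [hppos j])]
    linarith [hppos j]
  have htfrac : ∀ j, t j / (1 - t j) = B / p j := by
    intro j
    have h1 : B + p j ≠ 0 := by positivity
    have h2 : p j ≠ 0 := (hppos j).ne'
    have h3 : 1 - t j = p j / (B + p j) := by
      rw [htdef]
      field_simp; ring
    rw [h3, htdef]
    exact div_div_div_cancel_right₀ h1 _ _
  -- summability
  have hsummable : Summable (fun j => B / p j) := by
    have hsum2 : Summable (fun n : ℕ => 1/((n:ℝ))^2) :=
      summable_one_div_nat_pow.mpr (by norm_num)
    have hshift : Summable (fun n : ℕ => 1/(((n:ℝ))+1)^2) := by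
      have := (summable_nat_add_iff (f := fun n : ℕ => 1/((n:ℝ))^2) 1).mpr hsum2
      apply this.congr
      intro n
      push_cast
      ring
    have : (fun j => B / p j) = fun j : ℕ => (B/π^2) * (1/(((j:ℝ))+1)^2) := by
      funext j
      rw [hpdef]
      field_simp
    rw [this]
    exact hshift.mul_left _
  set S : ℝ := ∑' j, B / p j with hSdef
  have hS : ∀ N, ∑ j ∈ Finset.range N, t j / (1 - t j) ≤ S := by
    intro N
    have : ∑ j ∈ Finset.range N, t j / (1 - t j) = ∑ j ∈ Finset.range N, B / p j :=
      Finset.sum_congr rfl (fun j _ => htfrac j)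
    rw [this, hSdef]
    apply Summable.sum_le_tsum _ _ hsummable
    intro j _
    positivity
  have hbd : ∀ (ρ : ℝ), 0 ≤ ρ → ρ < 1 → ∀ N k', qs t N k' * ρ^k' ≤ Real.exp (2*S) :=
    fun ρ h0 h1 => qs_bound ht0' ht1 h0 h1 hS
  -- the limit coefficients
  set qi : ℕ → ℝ := fun k' => ⨆ N, qs t N k' with hqidef
  have htend : ∀ k', Tendsto (fun N => qs t N k') atTop (𝓝 (qi k')) := by
    intro k'
    apply tendsto_atTop_ciSup (qs_mono ht0' k')
    refine ⟨Real.exp (2*S) * 2^k', ?_⟩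
    rintro x ⟨N, rfl⟩
    have h1 := hbd (1/2) (by norm_num) (by norm_num) N k'
    have h2 : ((1:ℝ)/2)^k' = (2^k')⁻¹ := by
      rw [one_div, inv_pow]
    rw [h2] at h1
    have h3 : (0:ℝ) < 2^k' := by positivity
    calc qs t N k' = qs t N k' * (2^k')⁻¹ * 2^k' := by field_simp
    _ ≤ Real.exp (2*S) * 2^k' := by
        apply mul_le_mul_of_nonneg_right h1 h3.le
  have hqibd : ∀ (ρ : ℝ), 0 ≤ ρ → ρ < 1 → ∀ k', qi k' * ρ^k' ≤ Real.exp (2*S) := by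
    intro ρ h0 h1 k'
    apply le_of_tendsto ((htend k').mul_const (ρ^k'))
    exact Filter.Eventually.of_forall (fun N => hbd ρ h0 h1 N k')
  set C : ℝ := r^2 / (Real.sinh (r/2))^2 with hCdef
  have hsinhr2 : 0 < Real.sinh (r/2) := by
    rw [Real.sinh_pos_iff]; positivity
  have hCpos : 0 < C := by
    rw [hCdef]; positivity
  -- analytic identity
  have hAnalytic : ∀ z : ℝ, |z| < 1 → HasSum (fun k' : ℕ => (C * qi k') * z ^ k')
      (r ^ 2 * (1 - z) / (Real.sinh (r * Real.sqrt (1 - z) / 2)) ^ 2) := by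
    intro z hz
    have hz1 : -1 < z ∧ z < 1 := abs_lt.mp hz
    have h1z : 0 < 1 - z := by linarith [hz1.2]
    set u : ℝ := r * Real.sqrt (1 - z) / 2 with hudef
    have hu : 0 < u := by
      rw [hudef]
      have := Real.sqrt_pos.mpr h1z
      positivity
    have hu2 : u^2 = B*(1-z) := by
      rw [hudef, hBdef]
      rw [div_pow, mul_pow, Real.sq_sqrt h1z.le]
      ring
    have hsinhu : 0 < Real.sinh u := by rw [Real.sinh_pos_iff]; exact hu
    -- factor identity
    have hBz : ∀ j, 0 < B + p j - B*z := by
      intro j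
      have h1 : B*z ≤ B*|z| := by
        have := le_abs_self z
        nlinarith
      have h2 : B*z < B := by
        nlinarith [abs_nonneg z]
      linarith [hppos j]
    have hfactor : ∀ j, ((1 - t j * z)⁻¹)^2 = ((1 + B/p j) / (1 + u^2/p j))^2 := by
      intro j
      congr 1
      have h1 : B + p j ≠ 0 := by positivity
      have h2 : p j ≠ 0 := (hppos j).ne'
      have h3 : (1 : ℝ) - t j * z = (B + p j - B*z)/(B + p j) := by
        rw [htdef]
        field_simp
      have h4 : (1 : ℝ) + u^2/p j = (B + p j - B*z)/p j := by
        rw [hu2]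
        field_simp
        ring
      have h5 : (1 : ℝ) + B/p j = (B + p j)/p j := by field_simp; ring
      rw [h3, h4, h5, inv_div, div_div_div_cancel_right₀ h2]
    -- product convergence
    have hPU : Tendsto (fun n : ℕ => u * ∏ j ∈ Finset.range n, (1 + u^2/p j))
        atTop (𝓝 (Real.sinh u)) := sinh_prod u
    have hPA : Tendsto (fun n : ℕ => (r/2) * ∏ j ∈ Finset.range n, (1 + B/p j))
        atTop (𝓝 (Real.sinh (r/2))) := by
      have h := sinh_prod (r/2)
      apply h.congr
      intro n
      congr 1
      apply Finset.prod_congr rfl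
      intro j _
      rw [hBdef, hpdef]
      ring
    have hPA' : Tendsto (fun n : ℕ => ∏ j ∈ Finset.range n, (1 + B/p j))
        atTop (𝓝 (Real.sinh (r/2) / (r/2))) := by
      have h := hPA.div_const (r/2)
      apply h.congr
      intro n
      field_simp
    have hPU' : Tendsto (fun n : ℕ => ∏ j ∈ Finset.range n, (1 + u^2/p j))
        atTop (𝓝 (Real.sinh u / u)) := by
      have h := hPU.div_const u
      apply h.congr
      intro n
      field_simp
    have hsinhu_div : Real.sinh u / u ≠ 0 := by positivity
    set L : ℝ := ((Real.sinh (r/2) / (r/2)) / (Real.sinh u / u))^2 with hLdef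
    have hQlim : Tendsto (fun N => ∏ j ∈ Finset.range N, ((1 - t j * z)⁻¹)^2)
        atTop (𝓝 L) := by
      have h := ((hPA'.div hPU' hsinhu_div).pow 2)
      apply h.congr
      intro N
      simp only [Pi.div_apply]
      rw [← Finset.prod_div_distrib, ← Finset.prod_pow]
      exact (Finset.prod_congr rfl (fun j _ => (hfactor j))).symm
    -- dominated convergence
    set ρz : ℝ := (1 + |z|)/2 with hρdef
    have hρ0 : 0 < ρz := by positivity
    have hρ1 : ρz < 1 := by rw [hρdef]; linarith
    have hzρ : |z| < ρz := by rw [hρdef]; linarith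
    have hzρ' : |z|/ρz < 1 := by rwa [div_lt_one hρ0]
    have hboundk : ∀ N k', ‖qs t N k' * z^k'‖ ≤ Real.exp (2*S) * (|z|/ρz)^k' := by
      intro N k'
      rw [norm_coef_mul_pow (qs_nonneg ht0' N k')]
      have e1 : |z|^k' = ρz^k' * (|z|/ρz)^k' := by
        rw [← mul_pow]
        congr 1
        field_simp
      rw [e1, ← mul_assoc]
      apply mul_le_mul_of_nonneg_right (hbd ρz hρ0.le hρ1 N k')
      positivity
    have hbsum : Summable (fun k' : ℕ => Real.exp (2*S) * (|z|/ρz)^k') :=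
      (summable_geometric_of_lt_one (by positivity) hzρ').mul_left _
    have hT : Tendsto (fun N => ∑' k', qs t N k' * z^k') atTop
        (𝓝 (∑' k', qi k' * z^k')) := by
      apply tendsto_tsum_of_dominated_convergence hbsum
      · intro k'
        exact (htend k').mul_const (z^k')
      · exact Filter.Eventually.of_forall (fun N => hboundk N)
    have hT' : Tendsto (fun N => ∏ j ∈ Finset.range N, ((1 - t j * z)⁻¹)^2) atTop
        (𝓝 (∑' k', qi k' * z^k')) := by
      apply hT.congr
      intro N
      exact (qs_hasSum ht0' ht1 N z hz).tsum_eq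
    have htsum_eq : (∑' k', qi k' * z^k') = L := tendsto_nhds_unique hT' hQlim
    have hqinn : ∀ k', 0 ≤ qi k' := by
      intro k'
      exact le_of_tendsto_of_tendsto tendsto_const_nhds (htend k')
        (Filter.Eventually.of_forall (fun N => qs_nonneg ht0' N k'))
    have hsummqi : Summable (fun k' => qi k' * z^k') := by
      apply Summable.of_norm_bounded hbsum
      intro k'
      rw [norm_coef_mul_pow (hqinn k')]
      have e1 : |z|^k' = ρz^k' * (|z|/ρz)^k' := by
        rw [← mul_pow]
        congr 1
        field_simp
      rw [e1, ← mul_assoc]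
      apply mul_le_mul_of_nonneg_right (hqibd ρz hρ0.le hρ1 k')
      positivity
    have hqiHasSum : HasSum (fun k' => qi k' * z^k') L := by
      have := hsummqi.hasSum
      rwa [htsum_eq] at this
    have hfinal := hqiHasSum.mul_left C
    have hCL : C * L = r ^ 2 * (1 - z) / (Real.sinh (r * Real.sqrt (1 - z) / 2)) ^ 2 := by
      have hru : Real.sinh (r * Real.sqrt (1 - z) / 2) = Real.sinh u := by rw [hudef]
      rw [hru, hCdef, hLdef]
      have h1 : Real.sinh (r/2) ≠ 0 := hsinhr2.ne'
      have h2 : Real.sinh u ≠ 0 := hsinhu.ne'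
      have h3 : u ≠ 0 := hu.ne'
      have h4 : r ≠ 0 := hr.ne'
      have h5 : u^2 = r^2*(1-z)/4 := by rw [hu2, hBdef]; ring
      field_simp
      have hsq : Real.sqrt (1 - z) ^ 2 = 1 - z := Real.sq_sqrt h1z.le
      linear_combination (4*r^2*(Real.sinh (r/2))^2*(Real.sinh u)^2) * h5 + (r^2 - r^4*(Real.sinh (r/2))^2*(Real.sinh u)^2) * hsq
    rw [hCL] at hfinal
    apply hfinal.congr_fun
    intro k'
    ring
  -- uniqueness of coefficients
  have hdq : ∀ k', d k' = C * qi k' := by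
    have huniq := coeff_unique (e := fun k' => d k' - C * qi k') (by
      intro z hz
      have h1 := hd z hz
      have h2 := hAnalytic z hz
      have h3 := h1.sub h2
      rw [sub_self] at h3
      apply h3.congr_fun
      intro k'
      ring)
    intro k'
    have h0 : d k' - C * qi k' = 0 := huniq k'
    linarith
  -- log-concavity passes to the limit
  have hlc : qi m * qi (m+2) ≤ qi (m+1)^2 := by
    apply le_of_tendsto_of_tendsto ((htend m).mul (htend (m+2))) ((htend (m+1)).pow 2)
    filter_upwards [Filter.eventually_ge_atTop 1] with N hN
    obtain ⟨N', rfl⟩ : ∃ N', N = N' + 1 := ⟨N - 1, by omega⟩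
    exact (qs_pos ht0 N').2 m
  have hsub : m + 1 - 1 = m := rfl
  rw [hsub, hdq, hdq, hdq]
  calc (C * qi m) * (C * qi (m+2)) = C^2 * (qi m * qi (m+2)) := by ring
  _ ≤ C^2 * qi (m+1)^2 := by
      apply mul_le_mul_of_nonneg_left hlc (by positivity)
  _ = (C * qi (m+1))^2 := by ring
end

section
/- If (u_k) and (v_k) are nonnegative logarithmically concave sequences (u_k^2 ≥ u_{k-1}u_{k+1} and v_k^2 ≥ v_{k-1}v_{k+1} with no internal zeros), then their convolution w_n = Σ_{k} u_k v_{n-k} is logarithmically concave. -/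
/-- Generalized log-concavity: from pairwise log-concavity plus no internal
zeros, obtain `u a * u (b+1) ≤ u (a+1) * u b` for all `a ≤ b`. -/
lemma genlc18 (u : ℕ → ℝ) (hu0 : ∀ k, 0 ≤ u k)
    (hulc : ∀ k : ℕ, 1 ≤ k → u (k - 1) * u (k + 1) ≤ (u k) ^ 2)
    (hunz : ∀ i j k : ℕ, i ≤ j → j ≤ k → 0 < u i → 0 < u k → 0 < u j) :
    ∀ a b : ℕ, a ≤ b → u a * u (b + 1) ≤ u (a + 1) * u b := by
  intro a b hab
  induction b, hab using Nat.le_induction with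
  | base => exact le_of_eq (mul_comm _ _)
  | succ b hab ih =>
    rcases eq_or_lt_of_le (hu0 (b + 2)) with h2 | h2
    · calc u a * u (b + 1 + 1) = 0 := by rw [← h2]; ring
        _ ≤ u (a + 1) * u (b + 1) := mul_nonneg (hu0 _) (hu0 _)
    rcases eq_or_lt_of_le (hu0 a) with ha | ha
    · calc u a * u (b + 1 + 1) = 0 := by rw [← ha]; ring
        _ ≤ u (a + 1) * u (b + 1) := mul_nonneg (hu0 _) (hu0 _)
    have hb : 0 < u b := hunz a b (b + 2) hab (by omega) ha h2
    have hb1 : 0 < u (b + 1) := hunz a (b + 1) (b + 2) (by omega) (by omega) ha h2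
    have hc := hulc (b + 1) (by omega)
    simp only [Nat.add_sub_cancel] at hc
    nlinarith [mul_le_mul_of_nonneg_right ih (hu0 (b + 2)),
      mul_le_mul_of_nonneg_left hc (hu0 (a + 1))]

/-- Two-by-two Cauchy–Binet style inequality. -/
lemma keysum18 (s : Finset ℕ) (f g p q : ℕ → ℝ)
    (h : ∀ k ∈ s, ∀ l ∈ s, k < l →
      0 ≤ (f k * g l - g k * f l) * (p k * q l - p l * q k)) :
    (∑ k ∈ s, g k * p k) * (∑ k ∈ s, f k * q k) ≤
      (∑ k ∈ s, f k * p k) * (∑ k ∈ s, g k * q k) := by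
  have h' : ∀ k ∈ s, ∀ l ∈ s,
      0 ≤ (f k * g l - g k * f l) * (p k * q l - p l * q k) := by
    intro k hk l hl
    rcases lt_trichotomy k l with hkl | rfl | hkl
    · exact h k hk l hl hkl
    · have e : (f k * g k - g k * f k) * (p k * q k - p k * q k) = 0 := by ring
      rw [e]
    · calc (0 : ℝ) ≤ (f l * g k - g l * f k) * (p l * q k - p k * q l) :=
          h l hl k hk hkl
        _ = (f k * g l - g k * f l) * (p k * q l - p l * q k) := by ring
  have e1 : (∑ k ∈ s, f k * p k) * (∑ k ∈ s, g k * q k)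
      - (∑ k ∈ s, g k * p k) * (∑ k ∈ s, f k * q k)
      = ∑ k ∈ s, ∑ l ∈ s,
          (f k * p k * (g l * q l) - g k * p k * (f l * q l)) := by
    rw [Finset.sum_mul_sum, Finset.sum_mul_sum, ← Finset.sum_sub_distrib]
    exact Finset.sum_congr rfl fun k _ => (Finset.sum_sub_distrib _ _).symm
  have e2 : (∑ k ∈ s, ∑ l ∈ s,
        (f l * p l * (g k * q k) - g l * p l * (f k * q k)))
      = ∑ k ∈ s, ∑ l ∈ s,
        (f k * p k * (g l * q l) - g k * p k * (f l * q l)) := Finset.sum_comm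
  have e4 : (∑ k ∈ s, ∑ l ∈ s,
        (f k * g l - g k * f l) * (p k * q l - p l * q k))
      = (∑ k ∈ s, ∑ l ∈ s,
          (f k * p k * (g l * q l) - g k * p k * (f l * q l)))
        + ∑ k ∈ s, ∑ l ∈ s,
            (f l * p l * (g k * q k) - g l * p l * (f k * q k)) := by
    rw [← Finset.sum_add_distrib]
    refine Finset.sum_congr rfl fun k _ => ?_
    rw [← Finset.sum_add_distrib]
    exact Finset.sum_congr rfl fun l _ => by ring
  have hnn : 0 ≤ ∑ k ∈ s, ∑ l ∈ s,
      (f k * g l - g k * f l) * (p k * q l - p l * q k) :=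
    Finset.sum_nonneg fun k hk => Finset.sum_nonneg fun l hl => h' k hk l hl
  rw [e4, e2] at hnn
  linarith [e1, hnn]

theorem stmt18 (u v : ℕ → ℝ)
    (hu0 : ∀ k, 0 ≤ u k) (hv0 : ∀ k, 0 ≤ v k)
    (hulc : ∀ k : ℕ, 1 ≤ k → u (k - 1) * u (k + 1) ≤ (u k) ^ 2)
    (hvlc : ∀ k : ℕ, 1 ≤ k → v (k - 1) * v (k + 1) ≤ (v k) ^ 2)
    (hunz : ∀ i j k : ℕ, i ≤ j → j ≤ k → 0 < u i → 0 < u k → 0 < u j)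
    (hvnz : ∀ i j k : ℕ, i ≤ j → j ≤ k → 0 < v i → 0 < v k → 0 < v j)
    (w : ℕ → ℝ)
    (hw : ∀ n : ℕ, w n = ∑ k ∈ Finset.range (n + 1), u k * v (n - k)) :
    ∀ n : ℕ, 1 ≤ n → w (n - 1) * w (n + 1) ≤ (w n) ^ 2 := by
  intro n hn
  obtain ⟨m, rfl⟩ : ∃ m, n = m + 1 := ⟨n - 1, by omega⟩
  have hgen_u := genlc18 u hu0 hulc hunz
  have hgen_v := genlc18 v hv0 hvlc hvnz
  -- the four functions
  set f : ℕ → ℝ := fun k => u k with hf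
  set g : ℕ → ℝ := fun k => if 1 ≤ k then u (k - 1) else 0 with hg
  set p : ℕ → ℝ := fun k => if k ≤ m + 1 then v (m + 1 - k) else 0 with hp
  set q : ℕ → ℝ := fun k => v (m + 2 - k) with hq
  have hg0 : ∀ k, 0 ≤ g k := by
    intro k; rw [hg]; dsimp only; split <;> [exact hu0 _; exact le_refl 0]
  have hp0 : ∀ k, 0 ≤ p k := by
    intro k; rw [hp]; dsimp only; split <;> [exact hv0 _; exact le_refl 0]
  -- four sum identities over range (m+3)
  have hA : w (m + 1) = ∑ k ∈ Finset.range (m + 3), f k * p k := by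
    rw [hw (m + 1)]
    refine Eq.symm ?_
    rw [show m + 3 = (m + 2) + 1 from rfl, Finset.sum_range_succ]
    have h1 : p (m + 2) = 0 := by rw [hp]; simp
    rw [h1, mul_zero, add_zero]
    refine Finset.sum_congr rfl fun k hk => ?_
    rw [Finset.mem_range] at hk
    rw [hf, hp]; dsimp only; rw [if_pos (by omega)]
  have hB : w (m + 1) = ∑ k ∈ Finset.range (m + 3), g k * q k := by
    rw [hw (m + 1)]
    refine Eq.symm ?_
    rw [show m + 3 = (m + 2) + 1 from rfl, Finset.sum_range_succ']
    have h0 : g 0 * q 0 = 0 := by rw [hg]; simp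
    rw [h0, add_zero]
    refine Finset.sum_congr rfl fun k hk => ?_
    rw [Finset.mem_range] at hk
    rw [hg, hq]; dsimp only
    rw [if_pos (by omega), show k + 1 - 1 = k from rfl,
      show m + 2 - (k + 1) = m + 1 - k by omega]
  have hC : w (m + 2) = ∑ k ∈ Finset.range (m + 3), f k * q k := by
    rw [hw (m + 2)]
  have hD : w m = ∑ k ∈ Finset.range (m + 3), g k * p k := by
    rw [hw m]
    refine Eq.symm ?_
    rw [show m + 3 = (m + 2) + 1 from rfl, Finset.sum_range_succ]
    have h1 : p (m + 2) = 0 := by rw [hp]; simp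
    rw [h1, mul_zero, add_zero]
    rw [show m + 2 = (m + 1) + 1 from rfl, Finset.sum_range_succ']
    have h0 : g 0 * p 0 = 0 := by rw [hg]; simp
    rw [h0, add_zero]
    refine Finset.sum_congr rfl fun k hk => ?_
    rw [Finset.mem_range] at hk
    rw [hg, hp]; dsimp only
    rw [if_pos (by omega), if_pos (by omega), show k + 1 - 1 = k from rfl,
      show m + 1 - (k + 1) = m - k by omega]
  -- positivity of the 2x2 minors
  have hkey : ∀ k ∈ Finset.range (m + 3), ∀ l ∈ Finset.range (m + 3), k < l →
      0 ≤ (f k * g l - g k * f l) * (p k * q l - p l * q k) := by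
    intro k hk l hl hkl
    rw [Finset.mem_range] at hk hl
    have hgl : g l = u (l - 1) := by rw [hg]; dsimp only; rw [if_pos (by omega)]
    have hfac1 : g k * f l ≤ f k * g l := by
      rcases Nat.eq_zero_or_pos k with rfl | hk1
      · have : g 0 = 0 := by rw [hg]; simp
        rw [this, zero_mul]
        exact mul_nonneg (hu0 _) (hg0 _)
      · obtain ⟨a, rfl⟩ : ∃ a, k = a + 1 := ⟨k - 1, by omega⟩
        obtain ⟨b, rfl⟩ : ∃ b, l = b + 1 := ⟨l - 1, by omega⟩
        have hga : g (a + 1) = u a := by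
          rw [hg]; dsimp only; rw [if_pos (by omega)]; rfl
        have hgb : g (b + 1) = u b := by
          rw [hg]; dsimp only; rw [if_pos (by omega)]; rfl
        rw [hga, hgb, hf]
        exact hgen_u a b (by omega)
    have hfac2 : p l * q k ≤ p k * q l := by
      rcases Nat.lt_or_ge l (m + 2) with hl2 | hl2
      · have hpl : p l = v (m + 1 - l) := by
          rw [hp]; dsimp only; rw [if_pos (by omega)]
        have hpk : p k = v (m + 1 - k) := by
          rw [hp]; dsimp only; rw [if_pos (by omega)]
        rw [hpl, hpk, hq]; dsimp only
        rw [show m + 2 - k = (m + 1 - k) + 1 by omega,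
          show m + 2 - l = (m + 1 - l) + 1 by omega]
        linarith [hgen_v (m + 1 - l) (m + 1 - k) (by omega : m + 1 - l ≤ m + 1 - k)]
      · have hpl : p l = 0 := by rw [hp]; dsimp only; rw [if_neg (by omega)]
        rw [hpl, zero_mul]
        exact mul_nonneg (hp0 _) (hv0 _)
    exact mul_nonneg (by linarith) (by linarith)
  have := keysum18 (Finset.range (m + 3)) f g p q hkey
  rw [← hA, ← hB, ← hC, ← hD] at this
  have hsub : m + 1 - 1 = m := rfl
  rw [hsub]
  nlinarith [this]
end
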